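/- arXiv:2310.04545 — 10 statements merged into one kernel-verified Lean document; each statement's English description precedes it below -/
import Mathlib

section
/- For every x ∈ (0,∞) and t > 0, the function y ↦ Ψ^x(t,y) is differentiable on (0,∞) with derivative ∂_y Ψ^x(t,y) = −q_t(y,x); equivalently, for all y ∈ (0,∞), y · ∂_y Ψ^x(t,y) = −(1/a) p_t(θ(x,y,t)). -/
open MeasureTheory Real Set

/-- Gaussian heat kernel `p_t(z) = (2πt)^{-1/2} exp(-z²/(2t))`. -/
noncomputable def heatK (t z : ℝ) : ℝ :=
  (Real.sqrt (2 * Real.pi * t))⁻¹ * Real.exp (-(z ^ 2) / (2 * t))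

/-- `q_t(x,y) = (1/(ax)) p_t(log x /a - log y /a + at/2)`. -/
noncomputable def qker (a t x y : ℝ) : ℝ :=
  (a * x)⁻¹ * heatK t (Real.log x / a - Real.log y / a + a * t / 2)

/-- `q̂_t(x,y) = (1/(ax)) p_t(log x /a - log y /a - at/2)`. -/
noncomputable def qhat (a t x y : ℝ) : ℝ :=
  (a * x)⁻¹ * heatK t (Real.log x / a - Real.log y / a - a * t / 2)

/-- `θ(x,y,t) = log x /a - log y /a - at/2`. -/
noncomputable def theta (a x y t : ℝ) : ℝ :=
  Real.log x / a - Real.log y / a - a * t / 2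

/-- `Ψ^x(t,y) = ∫_0^x q̂_t(z,y) dz`. -/
noncomputable def Psi (a x t y : ℝ) : ℝ := ∫ z in Set.Ioc (0:ℝ) x, qhat a t z y

/-- standard normal cdf `Φ(ξ) = ∫_{-∞}^ξ p_1(z) dz`. -/
noncomputable def Phi (ξ : ℝ) : ℝ := ∫ z in Set.Iic ξ, heatK 1 z

lemma heatK_neg (t z : ℝ) : heatK t (-z) = heatK t z := by simp [heatK]

lemma heatK_scale {t : ℝ} (ht : 0 < t) (u : ℝ) :
    heatK t (Real.sqrt t * u) = (Real.sqrt t)⁻¹ * heatK 1 u := by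
  unfold heatK
  have h1 : Real.sqrt (2 * Real.pi * t) = Real.sqrt (2 * Real.pi * 1) * Real.sqrt t := by
    rw [← Real.sqrt_mul (by positivity)]; ring_nf
  have h2 : -((Real.sqrt t * u) ^ 2) / (2 * t) = -(u ^ 2) / (2 * 1) := by
    rw [mul_pow, Real.sq_sqrt ht.le]; field_simp
  rw [h1, h2, mul_inv]; ring

lemma heatK_one_integrable : Integrable (heatK 1) := by
  have : heatK 1 = fun z => (Real.sqrt (2 * Real.pi * 1))⁻¹ * Real.exp (-(1/2 : ℝ) * z ^ 2) := by
    funext z; unfold heatK; rw [show -(z ^ 2) / (2 * 1) = -(1/2 : ℝ) * z ^ 2 by ring]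
  rw [this]
  exact (integrable_exp_neg_mul_sq (by norm_num)).const_mul _

lemma heatK_one_continuous : Continuous (heatK 1) := by
  unfold heatK; fun_prop

lemma hasDerivAt_Phi (ξ : ℝ) : HasDerivAt Phi (heatK 1 ξ) ξ := by
  have hint := heatK_one_integrable
  have hcont := heatK_one_continuous
  have h1 : ∀ ξ' : ℝ, Phi ξ' = (∫ z in Iic (0:ℝ), heatK 1 z) + ∫ z in (0:ℝ)..ξ', heatK 1 z := by
    intro ξ'
    have := intervalIntegral.integral_Iic_sub_Iic (μ := volume) (f := heatK 1) (a := (0:ℝ))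
      (b := ξ') hint.integrableOn hint.integrableOn
    unfold Phi; linarith [this]
  have h2 : HasDerivAt (fun u => ∫ z in (0:ℝ)..u, heatK 1 z) (heatK 1 ξ) ξ :=
    intervalIntegral.integral_hasDerivAt_right hint.intervalIntegrable
      hcont.aestronglyMeasurable.stronglyMeasurableAtFilter hcont.continuousAt
  have := (h2.const_add (∫ z in Iic (0:ℝ), heatK 1 z))
  exact this.congr_of_eventuallyEq (Filter.Eventually.of_forall fun u => (h1 u))

lemma psi_eq {a x t y : ℝ} (ha : 0 < a) (hx : 0 < x) (ht : 0 < t) (hy : 0 < y) :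
    Psi a x t y = Phi (theta a x y t / Real.sqrt t) := by
  have hst : 0 < Real.sqrt t := Real.sqrt_pos.2 ht
  set c : ℝ := Real.log y / a + a * t / 2 with hc
  set ξ : ℝ := theta a x y t / Real.sqrt t with hξ
  have hξθ : Real.sqrt t * ξ = theta a x y t := by
    rw [hξ]; field_simp
  set φ : ℝ → ℝ := fun u => Real.exp (a * (Real.sqrt t * u + c)) with hφ
  have hφtop : a * (Real.sqrt t * ξ + c) = Real.log x := by
    rw [hξθ]; unfold theta; rw [hc]; field_simp; ring
  have hderiv : ∀ u ∈ Iic ξ, HasDerivWithinAt φ (a * Real.sqrt t * φ u) (Iic ξ) u := by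
    intro u _
    have h1 : HasDerivAt (fun u : ℝ => a * (Real.sqrt t * u + c)) (a * Real.sqrt t) u := by
      simpa using (((hasDerivAt_id u).const_mul (Real.sqrt t)).add_const c).const_mul a
    have := h1.exp
    exact (this.congr_deriv (by rw [hφ]; ring)).hasDerivWithinAt
  have hinj : InjOn φ (Iic ξ) := by
    intro u _ v _ h
    have h2 := Real.exp_injective h
    have h3 : Real.sqrt t * u = Real.sqrt t * v := by
      have := mul_left_cancel₀ ha.ne' h2
      linarith
    exact mul_left_cancel₀ hst.ne' h3
  have himg : φ '' Iic ξ = Ioc 0 x := by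
    ext z
    constructor
    · rintro ⟨u, hu, rfl⟩
      refine ⟨Real.exp_pos _, ?_⟩
      have h4 : a * (Real.sqrt t * u + c) ≤ Real.log x := by
        rw [← hφtop]
        have : Real.sqrt t * u ≤ Real.sqrt t * ξ := by
          exact mul_le_mul_of_nonneg_left hu hst.le
        nlinarith
      calc φ u ≤ Real.exp (Real.log x) := Real.exp_le_exp.2 h4
        _ = x := Real.exp_log hx
    · rintro ⟨hz0, hzx⟩
      refine ⟨(Real.log z / a - c) / Real.sqrt t, ?_, ?_⟩
      · have hlog : Real.log z ≤ Real.log x := Real.log_le_log hz0 hzx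
        have hξ' : ξ = (Real.log x / a - c) / Real.sqrt t := by
          rw [hξ]; unfold theta; rw [hc]; ring_nf
        rw [mem_Iic, hξ']
        gcongr
      · show Real.exp (a * (Real.sqrt t * ((Real.log z / a - c) / Real.sqrt t) + c)) = z
        have h5 : a * (Real.sqrt t * ((Real.log z / a - c) / Real.sqrt t) + c) = Real.log z := by
          field_simp; ring
        rw [h5, Real.exp_log hz0]
  have key := integral_image_eq_integral_abs_deriv_smul (f := φ)
    (f' := fun u => a * Real.sqrt t * φ u) measurableSet_Iic hderiv hinj
    (fun z => qhat a t z y)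
  have hintegrand : ∀ u : ℝ, |a * Real.sqrt t * φ u| • qhat a t (φ u) y = heatK 1 u := by
    intro u
    have hφpos : 0 < φ u := Real.exp_pos _
    rw [abs_of_pos (by positivity)]
    unfold qhat
    rw [hφ]
    simp only [Real.log_exp]
    have harg : a * (Real.sqrt t * u + c) / a - Real.log y / a - a * t / 2 = Real.sqrt t * u := by
      rw [hc]; field_simp; ring
    rw [harg, heatK_scale ht u, smul_eq_mul]
    have hφne : Real.exp (a * (Real.sqrt t * u + c)) ≠ 0 := (Real.exp_pos _).ne'
    field_simp
  rw [Psi, ← himg, key]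
  simp only [hintegrand]
  rfl

theorem Psi_deriv_space (a : ℝ) (ha : 0 < a) (x t : ℝ) (hx : 0 < x) (ht : 0 < t)
    (y : ℝ) (hy : 0 < y) :
    HasDerivAt (fun y' => Psi a x t y') (-(qker a t y x)) y ∧
    y * (-(qker a t y x)) = -(a⁻¹ * heatK t (theta a x y t)) := by
  have hst : 0 < Real.sqrt t := Real.sqrt_pos.2 ht
  set ξ : ℝ := theta a x y t / Real.sqrt t with hξ
  have hξθ : Real.sqrt t * ξ = theta a x y t := by rw [hξ]; field_simp
  have hqker : qker a t y x = (a * y)⁻¹ * heatK t (theta a x y t) := by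
    unfold qker
    congr 1
    rw [show Real.log y / a - Real.log x / a + a * t / 2 = -(theta a x y t) by
      unfold theta; ring]
    exact heatK_neg t _
  have hheat : heatK t (theta a x y t) = (Real.sqrt t)⁻¹ * heatK 1 ξ := by
    rw [← hξθ, heatK_scale ht]
  constructor
  · have hinner : HasDerivAt (fun y' : ℝ => theta a x y' t / Real.sqrt t)
        (-(y⁻¹ / a) / Real.sqrt t) y := by
      have h1 : HasDerivAt (fun y' : ℝ => Real.log x / a - Real.log y' / a - a * t / 2)
          (-(y⁻¹ / a)) y := by
        have := (((Real.hasDerivAt_log hy.ne').div_const a).const_sub (Real.log x / a)).sub_const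
          (a * t / 2)
        simpa using this
      exact h1.div_const (Real.sqrt t)
    have hcomp := (hasDerivAt_Phi ξ).comp y hinner
    have heq : (fun y' : ℝ => Phi (theta a x y' t / Real.sqrt t)) =ᶠ[nhds y]
        (fun y' => Psi a x t y') := by
      filter_upwards [eventually_gt_nhds hy] with y' hy'
      exact (psi_eq ha hx ht hy').symm
    have hval : heatK 1 ξ * (-(y⁻¹ / a) / Real.sqrt t) = -(qker a t y x) := by
      rw [hqker, hheat, mul_inv]
      ring
    have := hcomp.congr_of_eventuallyEq heq.symm
    rw [hval] at this
    exact this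
  · rw [hqker]
    field_simp
end

section
/- For every x ∈ (0,∞), the function (t,y) ↦ q_t(x,y) on (0,∞) × (0,∞) satisfies the partial differential equation ∂_t q_t(x,y) = (a² y²/2) ∂²_{yy} q_t(x,y); that is, for each fixed (t,y) ∈ (0,∞) × (0,∞), the derivative of s ↦ q_s(x,y) at s = t exists and equals (a² y²/2) times the second derivative of the function y' ↦ q_t(x,y') at y' = y. -/
open MeasureTheory Real Set

lemma heatK_hasDerivAt (t z : ℝ) (ht : 0 < t) :
    HasDerivAt (fun z => heatK t z) (-(z / t) * heatK t z) z := by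
  have h1 : HasDerivAt (fun z : ℝ => -(z ^ 2) / (2 * t)) (-(z / t)) z := by
    have h2 := ((hasDerivAt_pow 2 z).neg).div_const (2 * t)
    refine h2.congr_deriv ?_
    field_simp
    ring
  have h3 := (h1.exp).const_mul (Real.sqrt (2 * Real.pi * t))⁻¹
  refine h3.congr_deriv ?_
  simp only [heatK]
  ring

theorem qker_solves_gbm_pde (a : ℝ) (ha : 0 < a) (x : ℝ) (hx : 0 < x)
    (t y : ℝ) (ht : 0 < t) (hy : 0 < y) :
    HasDerivAt (fun s => qker a s x y)
      ((a ^ 2 * y ^ 2 / 2) * iteratedDeriv 2 (fun y' => qker a t x y') y) t := by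
  have hA : a ≠ 0 := ha.ne'
  have hT : t ≠ 0 := ht.ne'
  have hY : y ≠ 0 := hy.ne'
  have hX : x ≠ 0 := hx.ne'
  set S := Real.sqrt (2 * Real.pi * t) with hSdef
  have hSpos : 0 < S := Real.sqrt_pos.mpr (by positivity)
  have hS : S ≠ 0 := hSpos.ne'
  have hS2 : S ^ 2 = 2 * Real.pi * t := Real.sq_sqrt (by positivity)
  have hpi : Real.pi = S ^ 2 / (2 * t) := by rw [hS2]; field_simp
  set w : ℝ → ℝ := fun y' => Real.log x / a - Real.log y' / a + a * t / 2 with hwdef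
  -- derivative of w
  have hw : ∀ y' : ℝ, 0 < y' → HasDerivAt w (-(y'⁻¹ / a)) y' := fun y' hy' =>
    (((Real.hasDerivAt_log hy'.ne').div_const a).const_sub
      (Real.log x / a)).add_const (a * t / 2)
  -- first y-derivative
  have hfd : ∀ y' : ℝ, 0 < y' → HasDerivAt (fun z => qker a t x z)
      ((a * x)⁻¹ * (heatK t (w y') * (w y' / (a * t * y')))) y' := by
    intro y' hy'
    have h1 := ((heatK_hasDerivAt t (w y') ht).comp y' (hw y' hy')).const_mul (a * x)⁻¹
    have h2 : HasDerivAt (fun z => qker a t x z)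
        ((a * x)⁻¹ * (-(w y' / t) * heatK t (w y') * -(y'⁻¹ / a))) y' := h1
    refine h2.congr_deriv ?_
    field_simp
  set Fd : ℝ → ℝ := fun y' => (a * x)⁻¹ * (heatK t (w y') * (w y' / (a * t * y'))) with hFdef
  -- second y-derivative
  have hquot : HasDerivAt (fun y' => w y' / (a * t * y'))
      ((-(y⁻¹ / a) * (a * t * y) - w y * (a * t * 1)) / (a * t * y) ^ 2) y :=
    (hw y hy).div ((hasDerivAt_id y).const_mul (a * t)) (by positivity)
  have hFd : HasDerivAt Fd
      ((a * x)⁻¹ * ((-(w y / t) * heatK t (w y) * -(y⁻¹ / a)) * (w y / (a * t * y))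
        + heatK t (w y) * ((-(y⁻¹ / a) * (a * t * y) - w y * (a * t * 1)) / (a * t * y) ^ 2))) y :=
    (((heatK_hasDerivAt t (w y) ht).comp y (hw y hy)).mul hquot).const_mul (a * x)⁻¹
  have hD2 : iteratedDeriv 2 (fun y' => qker a t x y') y
      = (a * x)⁻¹ * ((-(w y / t) * heatK t (w y) * -(y⁻¹ / a)) * (w y / (a * t * y))
        + heatK t (w y) * ((-(y⁻¹ / a) * (a * t * y) - w y * (a * t * 1)) / (a * t * y) ^ 2)) := by
    rw [iteratedDeriv_succ, iteratedDeriv_one]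
    have hev : deriv (fun y' => qker a t x y') =ᶠ[nhds y] Fd := by
      filter_upwards [isOpen_Ioi.mem_nhds hy] with y' hy'
      exact (hfd y' hy').deriv
    rw [hev.deriv_eq, hFd.deriv]
  -- time derivative
  have hu : HasDerivAt (fun s => Real.log x / a - Real.log y / a + a * s / 2) (a * 1 / 2) t :=
    ((((hasDerivAt_id t).const_mul a).div_const 2).const_add (Real.log x / a - Real.log y / a))
  have hN := (hu.pow 2).neg
  have hD : HasDerivAt (fun s : ℝ => 2 * s) 2 t := by
    simpa using (hasDerivAt_id t).const_mul 2
  have hE := hN.div hD (by positivity)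
  have hB := hE.exp
  have hsq : HasDerivAt (fun s : ℝ => Real.sqrt (2 * Real.pi * s)) (1 / (2 * S) * (2 * Real.pi)) t := by
    have := (Real.hasDerivAt_sqrt (show (2:ℝ) * Real.pi * t ≠ 0 by positivity)).comp t
      ((hasDerivAt_id t).const_mul (2 * Real.pi))
    refine this.congr_deriv ?_
    rw [hSdef]; ring
  have hAinv := hsq.inv hS
  have hL := (hAinv.mul hB).const_mul (a * x)⁻¹
  rw [hD2]
  refine hL.congr_deriv ?_
  simp only [heatK, hwdef, ← hSdef, Pi.neg_apply, Pi.div_apply, Pi.pow_apply, Pi.inv_apply]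
  rw [hpi]
  push_cast
  field_simp
  ring
end

section
/- For every T ∈ (0,∞), every 0 < ℓ < L < ∞, and every q ∈ [1,∞), there exists a constant C ∈ (0,∞) (depending only on a, q, ℓ, L, T) such that for all t ∈ (0,T] and all x ∈ [ℓ,L]: ∫_0^∞ ( a^{-1} p_t(θ(x,y,t)) )^q dy ≤ C t^{-(q-1)/2}. -/
open MeasureTheory Real Set

lemma gauss_lin_int (b c d : ℝ) (hb : 0 < b) :
    Integrable (fun u : ℝ => Real.exp (-b * u ^ 2 + c * u + d)) := by
  have h : (fun u : ℝ => Real.exp (-b * u ^ 2 + c * u + d))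
      = fun u : ℝ => Real.exp (-b * (u - c / (2 * b)) ^ 2) * Real.exp (d + c ^ 2 / (4 * b)) := by
    funext u
    rw [← Real.exp_add]
    congr 1
    field_simp
    ring
  rw [h]
  exact ((integrable_exp_neg_mul_sq hb).comp_sub_right (c / (2 * b))).mul_const _

lemma gauss_lin (b c d : ℝ) (hb : 0 < b) :
    (∫ u : ℝ, Real.exp (-b * u ^ 2 + c * u + d))
      = Real.sqrt (π / b) * Real.exp (d + c ^ 2 / (4 * b)) := by
  have h : (fun u : ℝ => Real.exp (-b * u ^ 2 + c * u + d))
      = fun u : ℝ => Real.exp (-b * (u - c / (2 * b)) ^ 2) * Real.exp (d + c ^ 2 / (4 * b)) := by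
    funext u
    rw [← Real.exp_add]
    congr 1
    field_simp
    ring
  rw [h, integral_mul_const,
    integral_sub_right_eq_self (fun u : ℝ => Real.exp (-b * u ^ 2)) (c / (2 * b)),
    integral_gaussian]

lemma heq_lemma (a t x : ℝ) (ha : 0 < a) (ht : 0 < t) :
    (fun u : ℝ => |Real.exp u| • (a⁻¹ * heatK t (theta a x (Real.exp u) t)))
      = fun u : ℝ => (a * Real.sqrt (2 * π * t))⁻¹ *
        Real.exp (-(1/(2*t*a^2)) * u ^ 2 + ((Real.log x / a - a*t/2)/(t*a) + 1) * u
          + (-(Real.log x / a - a*t/2) ^ 2 / (2*t))) := by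
  funext u
  have hth : theta a x (Real.exp u) t = Real.log x / a - u / a - a * t / 2 := by
    simp [theta, Real.log_exp]
  rw [smul_eq_mul, abs_of_pos (Real.exp_pos u), hth]
  simp only [heatK]
  rw [show (Real.exp u) * (a⁻¹ * ((Real.sqrt (2 * π * t))⁻¹ *
      Real.exp (-(Real.log x / a - u / a - a * t / 2) ^ 2 / (2 * t))))
    = (a * Real.sqrt (2 * π * t))⁻¹ * (Real.exp u *
      Real.exp (-(Real.log x / a - u / a - a * t / 2) ^ 2 / (2 * t))) from by ring,
    ← Real.exp_add]
  congr 2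
  field_simp
  ring

lemma key_int (a t x : ℝ) (ha : 0 < a) (ht : 0 < t) :
    IntegrableOn (fun y => a⁻¹ * heatK t (theta a x y t)) (Set.Ioi (0:ℝ)) := by
  have hmap : Set.Ioi (0:ℝ) = Real.exp '' Set.univ := by
    rw [Set.image_univ, Real.range_exp]
  rw [hmap, integrableOn_image_iff_integrableOn_abs_deriv_smul MeasurableSet.univ
    (fun u _ => (Real.hasDerivAt_exp u).hasDerivWithinAt) Real.exp_injective.injOn]
  rw [IntegrableOn, Measure.restrict_univ]
  rw [show (fun u : ℝ => |Real.exp u| • (a⁻¹ * heatK t (theta a x (Real.exp u) t)))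
    = _ from heq_lemma a t x ha ht]
  exact (gauss_lin_int _ _ _ (by positivity)).const_mul _

lemma key_val (a t x : ℝ) (ha : 0 < a) (ht : 0 < t) (hx : 0 < x) :
    (∫ y in Set.Ioi (0:ℝ), a⁻¹ * heatK t (theta a x y t)) = x := by
  have hmap : Set.Ioi (0:ℝ) = Real.exp '' Set.univ := by
    rw [Set.image_univ, Real.range_exp]
  rw [hmap, integral_image_eq_integral_abs_deriv_smul MeasurableSet.univ
    (fun u _ => (Real.hasDerivAt_exp u).hasDerivWithinAt) Real.exp_injective.injOn,
    Measure.restrict_univ]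
  rw [show (fun u : ℝ => |Real.exp u| • (a⁻¹ * heatK t (theta a x (Real.exp u) t)))
    = _ from heq_lemma a t x ha ht]
  rw [integral_const_mul, gauss_lin _ _ _ (by positivity)]
  have h1 : π / (1/(2*t*a^2)) = (a * Real.sqrt (2 * π * t)) ^ 2 := by
    rw [mul_pow, Real.sq_sqrt (by positivity)]
    field_simp
  rw [h1, Real.sqrt_sq (by positivity)]
  have h2 : (-(Real.log x / a - a*t/2) ^ 2 / (2*t))
      + ((Real.log x / a - a*t/2)/(t*a) + 1) ^ 2 / (4 * (1/(2*t*a^2))) = Real.log x := by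
    field_simp
    ring
  rw [h2, Real.exp_log hx, ← mul_assoc, inv_mul_cancel₀ (by positivity), one_mul]

theorem lq_bound_ydPsi (a : ℝ) (ha : 0 < a)
    (T ℓ L q : ℝ) (hT : 0 < T) (hℓ : 0 < ℓ) (hℓL : ℓ < L) (hq : 1 ≤ q) :
    ∃ C : ℝ, 0 < C ∧ ∀ t ∈ Set.Ioc (0:ℝ) T, ∀ x ∈ Set.Icc ℓ L,
      (∫ y in Set.Ioi (0:ℝ), (a⁻¹ * heatK t (theta a x y t)) ^ q)
        ≤ C * t ^ (-(q - 1) / 2) := by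
  have h2π : (0:ℝ) < 2 * π := by positivity
  have hL : (0:ℝ) < L := hℓ.trans hℓL
  refine ⟨L * ((a * Real.sqrt (2 * π))⁻¹) ^ (q - 1), by positivity, ?_⟩
  rintro t ⟨ht0, htT⟩ x ⟨hxl, hxL⟩
  have hx0 : 0 < x := lt_of_lt_of_le hℓ hxl
  have hq1 : 0 ≤ q - 1 := by linarith
  set M := (a * Real.sqrt (2 * π * t))⁻¹ with hM
  have hM0 : (0:ℝ) < M := by rw [hM]; positivity
  -- pointwise bound
  have hpt : ∀ y : ℝ, (a⁻¹ * heatK t (theta a x y t)) ^ q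
      ≤ M ^ (q - 1) * (a⁻¹ * heatK t (theta a x y t)) := by
    intro y
    have hg0 : 0 < a⁻¹ * heatK t (theta a x y t) := by
      simp only [heatK]; positivity
    have hgM : a⁻¹ * heatK t (theta a x y t) ≤ M := by
      simp only [heatK, hM, mul_inv, ← mul_assoc]
      nth_rewrite 2 [← mul_one (a⁻¹ * (Real.sqrt (2 * π * t))⁻¹)]
      gcongr
      rw [Real.exp_le_one_iff]
      exact div_nonpos_of_nonpos_of_nonneg (neg_nonpos.mpr (sq_nonneg _)) (by positivity)
    calc (a⁻¹ * heatK t (theta a x y t)) ^ q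
        = (a⁻¹ * heatK t (theta a x y t)) ^ (q - 1 + 1) := by ring_nf
      _ = (a⁻¹ * heatK t (theta a x y t)) ^ (q - 1) * (a⁻¹ * heatK t (theta a x y t)) := by
          rw [Real.rpow_add hg0, Real.rpow_one]
      _ ≤ M ^ (q - 1) * (a⁻¹ * heatK t (theta a x y t)) :=
          mul_le_mul_of_nonneg_right (Real.rpow_le_rpow hg0.le hgM hq1) hg0.le
  have hmono : (∫ y in Set.Ioi (0:ℝ), (a⁻¹ * heatK t (theta a x y t)) ^ q)
      ≤ ∫ y in Set.Ioi (0:ℝ), M ^ (q - 1) * (a⁻¹ * heatK t (theta a x y t)) :=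
    integral_mono_of_nonneg
      (Filter.Eventually.of_forall fun y =>
        Real.rpow_nonneg (by simp only [heatK]; positivity) q)
      ((key_int a t x ha ht0).const_mul _)
      (Filter.Eventually.of_forall hpt)
  have hval : (∫ y in Set.Ioi (0:ℝ), M ^ (q - 1) * (a⁻¹ * heatK t (theta a x y t)))
      = M ^ (q - 1) * x := by
    rw [integral_const_mul, key_val a t x ha ht0 hx0]
  have hMsplit : M ^ (q - 1)
      = ((a * Real.sqrt (2 * π))⁻¹) ^ (q - 1) * t ^ (-(q - 1) / 2) := by
    have h1 : M = (a * Real.sqrt (2 * π))⁻¹ * (Real.sqrt t)⁻¹ := by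
      rw [hM, Real.sqrt_mul h2π.le, ← mul_assoc, mul_inv]
    rw [h1, Real.mul_rpow (by positivity) (by positivity)]
    congr 1
    rw [Real.inv_rpow (Real.sqrt_nonneg t), ← Real.rpow_neg (Real.sqrt_nonneg t),
      Real.sqrt_eq_rpow, ← Real.rpow_mul ht0.le]
    congr 1
    ring
  calc (∫ y in Set.Ioi (0:ℝ), (a⁻¹ * heatK t (theta a x y t)) ^ q)
      ≤ M ^ (q - 1) * x := hmono.trans_eq hval
    _ ≤ M ^ (q - 1) * L := mul_le_mul_of_nonneg_left hxL (by positivity)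
    _ = L * ((a * Real.sqrt (2 * π))⁻¹) ^ (q - 1) * t ^ (-(q - 1) / 2) := by
        rw [hMsplit]; ring
end

section
/- For every T ∈ (0,∞), every 0 < ℓ < L < ∞, and every q ∈ [1,∞), there exists a constant C ∈ (0,∞) (depending only on a, q, ℓ, L, T) such that for all t ∈ (0,T] and all x ∈ [ℓ,L]: ∫_0^∞ | ( a/2 + θ(x,y,t)/t ) p_t(θ(x,y,t)) |^q dy ≤ C t^{-q + 1/2}. -/
open MeasureTheory Real Set

set_option maxHeartbeats 1000000

lemma gauss_log_integral (a : ℝ) (ha : 0 < a) (β c : ℝ) (hβ : 0 < β) :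
    IntegrableOn (fun y => Real.exp (-β * (c - Real.log y / a) ^ 2)) (Ioi (0:ℝ)) ∧
    ∫ y in Ioi (0:ℝ), Real.exp (-β * (c - Real.log y / a) ^ 2)
      = a * Real.exp (a * c) * Real.exp (a ^ 2 / (4 * β)) * Real.sqrt (π / β) := by
  set g : ℝ → ℝ := fun y => Real.exp (-β * (c - Real.log y / a) ^ 2) with hg
  set f : ℝ → ℝ := fun v => Real.exp (a * (v + c)) with hf
  set f' : ℝ → ℝ := fun v => a * Real.exp (a * (v + c)) with hf'
  have hderiv : ∀ v ∈ (univ : Set ℝ), HasDerivWithinAt f (f' v) univ v := by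
    intro v _
    have h1 : HasDerivAt (fun v : ℝ => a * (v + c)) a v := by
      simpa using ((hasDerivAt_id v).add_const c).const_mul a
    simpa [f, f', mul_comm] using h1.exp
  have hinj : InjOn f univ := by
    intro v₁ _ v₂ _ h
    have h2 : a * (v₁ + c) = a * (v₂ + c) := Real.exp_injective h
    have := mul_left_cancel₀ (ne_of_gt ha) h2
    linarith
  have himg : f '' univ = Ioi (0:ℝ) := by
    rw [image_univ]
    ext y
    constructor
    · rintro ⟨v, rfl⟩; exact Real.exp_pos _
    · intro hy
      refine ⟨Real.log y / a - c, ?_⟩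
      have h3 : a * (Real.log y / a - c + c) = Real.log y := by field_simp; ring
      simp only [f, h3, Real.exp_log hy]
  have hsimp : (fun v => |f' v| • g (f v))
      = fun v => (a * Real.exp (a * c) * Real.exp (a ^ 2 / (4 * β)))
          * Real.exp (-β * (v - a / (2 * β)) ^ 2) := by
    funext v
    have h1 : Real.log (f v) = a * (v + c) := Real.log_exp _
    have h2 : c - a * (v + c) / a = -v := by field_simp; ring
    have habs : |f' v| = a * Real.exp (a * (v + c)) := abs_of_pos (by positivity)
    rw [smul_eq_mul, habs, hg]
    simp only [h1, h2]
    have hexp : a * (v + c) + (-β * (-v) ^ 2)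
        = (a * c + a ^ 2 / (4 * β)) + (-β * (v - a / (2 * β)) ^ 2) := by
      field_simp
      ring
    calc a * Real.exp (a * (v + c)) * Real.exp (-β * (-v) ^ 2)
        = a * Real.exp (a * (v + c) + (-β * (-v) ^ 2)) := by rw [Real.exp_add]; ring
      _ = a * Real.exp ((a * c + a ^ 2 / (4 * β)) + (-β * (v - a / (2 * β)) ^ 2)) := by
          rw [hexp]
      _ = a * Real.exp (a * c) * Real.exp (a ^ 2 / (4 * β))
            * Real.exp (-β * (v - a / (2 * β)) ^ 2) := by
          rw [Real.exp_add, Real.exp_add]; ring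
  have hIntR : Integrable (fun v => |f' v| • g (f v)) := by
    rw [hsimp]
    exact ((integrable_exp_neg_mul_sq hβ).comp_sub_right (a / (2 * β))).const_mul _
  constructor
  · have := (integrableOn_image_iff_integrableOn_abs_deriv_smul MeasurableSet.univ hderiv hinj g).mpr
      (hIntR.integrableOn)
    rwa [himg] at this
  · have hkey := integral_image_eq_integral_abs_deriv_smul MeasurableSet.univ hderiv hinj g
    rw [himg] at hkey
    rw [hkey, setIntegral_univ, hsimp]
    rw [MeasureTheory.integral_const_mul]
    have : ∫ v : ℝ, Real.exp (-β * (v - a / (2 * β)) ^ 2)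
        = ∫ v : ℝ, Real.exp (-β * v ^ 2) :=
      integral_sub_right_eq_self (fun v => Real.exp (-β * v ^ 2)) (a / (2 * β))
    rw [this, integral_gaussian]

theorem lq_bound_dtPsi (a : ℝ) (ha : 0 < a)
    (T ℓ L q : ℝ) (hT : 0 < T) (hℓ : 0 < ℓ) (hℓL : ℓ < L) (hq : 1 ≤ q) :
    ∃ C : ℝ, 0 < C ∧ ∀ t ∈ Set.Ioc (0:ℝ) T, ∀ x ∈ Set.Icc ℓ L,
      (∫ y in Set.Ioi (0:ℝ),
          |(a / 2 + theta a x y t / t) * heatK t (theta a x y t)| ^ q)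
        ≤ C * t ^ (-q + 1 / 2) := by
  have hq0 : 0 < q := lt_of_lt_of_le one_pos hq
  set K : ℝ := a * Real.sqrt T / 2 + 1 with hK
  have hK0 : 0 < K := by positivity
  set M : ℝ := 2 * a * L * Real.exp (a ^ 2 * T) * Real.sqrt π with hM
  have hL0 : 0 < L := lt_trans hℓ hℓL
  have hM0 : 0 < M := by positivity
  refine ⟨K ^ q * M, by positivity, ?_⟩
  rintro t ⟨ht0, htT⟩ x ⟨hℓx, hxL⟩
  have hx0 : 0 < x := lt_of_lt_of_le hℓ hℓx
  set s : ℝ := Real.sqrt t with hs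
  have hs0 : 0 < s := Real.sqrt_pos.mpr ht0
  have hst : s * s = t := Real.mul_self_sqrt ht0.le
  have hsT : s ≤ Real.sqrt T := Real.sqrt_le_sqrt htT
  set c : ℝ := Real.log x / a - a * t / 2 with hc
  set β : ℝ := q / (4 * t) with hβdef
  have hβ : 0 < β := by positivity
  have hθ : ∀ y, theta a x y t = c - Real.log y / a := by
    intro y; simp only [theta, hc]; ring
  -- pointwise bound
  have hpt : ∀ y : ℝ,
      |(a / 2 + theta a x y t / t) * heatK t (theta a x y t)| ^ q
        ≤ (K * t⁻¹) ^ q * Real.exp (-β * (c - Real.log y / a) ^ 2) := by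
    intro y
    set θ : ℝ := theta a x y t with hθy
    set E : ℝ := Real.exp (-θ ^ 2 / (4 * t)) with hE
    have hE0 : 0 < E := Real.exp_pos _
    have hE1 : E ≤ 1 := by
      rw [hE]
      apply Real.exp_le_one_iff.mpr
      rw [neg_div]
      exact neg_nonpos.mpr (by positivity)
    have hEE : Real.exp (-θ ^ 2 / (2 * t)) = E * E := by
      rw [hE, ← Real.exp_add]; congr 1; field_simp; ring
    have hθE : |θ| * E ≤ s := by
      have hmul : 4 * s * |θ| ≤ 4 * (s * s) + θ ^ 2 := by
        nlinarith [sq_abs θ, sq_nonneg (|θ| - 2 * s)]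
      have h1 : |θ| ≤ s * (1 + θ ^ 2 / (4 * t)) := by
        rw [← hst]
        have heq : s * (1 + θ ^ 2 / (4 * (s * s))) = (4 * (s * s) + θ ^ 2) / (4 * s) := by
          field_simp
        rw [heq, le_div_iff₀ (by positivity)]
        linarith
      have h2 : (1 + θ ^ 2 / (4 * t)) * E ≤ 1 := by
        have := Real.add_one_le_exp (θ ^ 2 / (4 * t))
        have h5 : Real.exp (θ ^ 2 / (4 * t)) * E = 1 := by
          rw [hE, ← Real.exp_add]; simp [neg_div]
        nlinarith [hE0.le]
      calc |θ| * E ≤ s * (1 + θ ^ 2 / (4 * t)) * E :=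
            mul_le_mul_of_nonneg_right h1 hE0.le
        _ = s * ((1 + θ ^ 2 / (4 * t)) * E) := by ring
        _ ≤ s * 1 := mul_le_mul_of_nonneg_left h2 hs0.le
        _ = s := mul_one s
    have hheat : heatK t θ ≤ s⁻¹ * (E * E) := by
      rw [heatK, hEE]
      have h1 : s ≤ Real.sqrt (2 * π * t) := by
        rw [hs]
        apply Real.sqrt_le_sqrt
        nlinarith [Real.pi_gt_three]
      have h2 : (Real.sqrt (2 * π * t))⁻¹ ≤ s⁻¹ :=
        inv_anti₀ hs0 h1
      exact mul_le_mul_of_nonneg_right h2 (by positivity)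
    have habs : |(a / 2 + θ / t) * heatK t θ| ≤ K * t⁻¹ * E := by
      have hh0 : 0 ≤ heatK t θ := by rw [heatK]; positivity
      rw [abs_mul, abs_of_nonneg hh0]
      have h1 : |a / 2 + θ / t| ≤ a / 2 + |θ| / t := by
        calc |a / 2 + θ / t| ≤ |a / 2| + |θ / t| := abs_add_le _ _
          _ = a / 2 + |θ| / t := by
              rw [abs_of_nonneg (by positivity : (0:ℝ) ≤ a / 2), abs_div,
                abs_of_nonneg ht0.le]
      calc |a / 2 + θ / t| * heatK t θ
          ≤ (a / 2 + |θ| / t) * (s⁻¹ * (E * E)) := by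
            apply mul_le_mul h1 hheat hh0 (by positivity)
        _ = (a / 2) * s⁻¹ * (E * E) + (|θ| * E) * (s⁻¹ * t⁻¹) * E := by
            field_simp
        _ ≤ (a / 2) * s⁻¹ * (1 * E) + s * (s⁻¹ * t⁻¹) * E := by
            gcongr
        _ = (a / 2 * s + 1) * t⁻¹ * E := by
            rw [← hst]; field_simp
        _ ≤ K * t⁻¹ * E := by
            have : a / 2 * s + 1 ≤ K := by
              rw [hK]; nlinarith
            gcongr
    calc |(a / 2 + θ / t) * heatK t θ| ^ q ≤ (K * t⁻¹ * E) ^ q :=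
          Real.rpow_le_rpow (abs_nonneg _) habs hq0.le
      _ = (K * t⁻¹) ^ q * E ^ q := Real.mul_rpow (by positivity) hE0.le
      _ = (K * t⁻¹) ^ q * Real.exp (-β * (c - Real.log y / a) ^ 2) := by
          congr 1
          rw [hE, ← Real.exp_mul]
          congr 1
          rw [hθy, hθ y, hβdef]
          field_simp
  obtain ⟨hInt, hVal⟩ := gauss_log_integral a ha β c hβ
  have hbound : (∫ y in Set.Ioi (0:ℝ),
      |(a / 2 + theta a x y t / t) * heatK t (theta a x y t)| ^ q)
      ≤ (K * t⁻¹) ^ q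
        * (a * Real.exp (a * c) * Real.exp (a ^ 2 / (4 * β)) * Real.sqrt (π / β)) := by
    rw [← hVal, ← MeasureTheory.integral_const_mul]
    apply MeasureTheory.integral_mono_of_nonneg
    · filter_upwards with y
      positivity
    · exact hInt.const_mul _
    · filter_upwards with y using hpt y
  refine le_trans hbound ?_
  -- now bound the constant factors
  have hec : Real.exp (a * c) ≤ L := by
    have : a * c = Real.log x - a ^ 2 * t / 2 := by rw [hc]; field_simp
    rw [this, Real.exp_sub, Real.exp_log hx0]
    calc x / Real.exp (a ^ 2 * t / 2) ≤ x / 1 := by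
          apply div_le_div_of_nonneg_left hx0.le one_pos
          exact Real.one_le_exp (by positivity)
      _ = x := div_one x
      _ ≤ L := hxL
  have heb : Real.exp (a ^ 2 / (4 * β)) ≤ Real.exp (a ^ 2 * T) := by
    apply Real.exp_le_exp.mpr
    have heq : a ^ 2 / (4 * β) = a ^ 2 * t / q := by
      rw [hβdef]; field_simp
    rw [heq]
    exact le_trans (div_le_self (by positivity) hq) (by nlinarith [sq_nonneg a])
  have hsq : Real.sqrt (π / β) ≤ 2 * Real.sqrt π * s := by
    have h1 : π / β ≤ 4 * π * t := by
      have heq : π / β = 4 * π * t / q := by rw [hβdef]; field_simp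
      rw [heq]
      exact div_le_self (by positivity) hq
    calc Real.sqrt (π / β) ≤ Real.sqrt (4 * π * t) := Real.sqrt_le_sqrt h1
      _ = 2 * Real.sqrt π * s := by
          rw [show 4 * π * t = (2 * Real.sqrt π) ^ 2 * t by
            rw [mul_pow, Real.sq_sqrt Real.pi_pos.le]; ring,
            Real.sqrt_mul (by positivity), Real.sqrt_sq (by positivity), hs]
  calc (K * t⁻¹) ^ q
        * (a * Real.exp (a * c) * Real.exp (a ^ 2 / (4 * β)) * Real.sqrt (π / β))
      ≤ (K * t⁻¹) ^ q * (a * L * Real.exp (a ^ 2 * T) * (2 * Real.sqrt π * s)) := by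
        gcongr
    _ = K ^ q * M * (t⁻¹ ^ q * s) := by
        rw [Real.mul_rpow hK0.le (by positivity), hM]; ring
    _ = K ^ q * M * t ^ (-q + 1 / 2) := by
        congr 1
        rw [Real.rpow_add ht0, Real.inv_rpow ht0.le, ← Real.rpow_neg ht0.le,
          hs, Real.sqrt_eq_rpow]
end

section
/- For every T ∈ (0,∞), every 0 < ℓ < L < ∞, and every q ∈ [1,∞), there exists a constant C ∈ (0,∞) (depending only on a, q, ℓ, L, T) such that for all t ∈ (0,T] and all x ∈ [ℓ,L]: ∫_0^∞ | ( 1/(2at) − θ(x,y,t)/(2t) − θ(x,y,t)²/(2at²) ) p_t(θ(x,y,t)) |^q dy ≤ C t^{-(3q-1)/2}. -/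
open MeasureTheory Real Set

lemma maj_integrable (q b : ℝ) (hq : 1 ≤ q) :
    Integrable (fun v : ℝ => (1 + v ^ 2) ^ q * Real.exp (b * |v| - v ^ 2 / 2)) := by
  have hq0 : 0 < q := lt_of_lt_of_le one_pos hq
  have hcont : Continuous (fun v : ℝ => (1 + v ^ 2) ^ q * Real.exp (b * |v| - v ^ 2 / 2)) := by
    apply Continuous.mul
    · exact Continuous.rpow_const (by continuity) (fun v => Or.inl (by positivity))
    · exact Real.continuous_exp.comp (by continuity)
  set E : ℝ := Real.exp (q * Real.log (16 * q) + 1 / 16 + 4 / 3 * b ^ 2) with hE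
  have hbase : Integrable (fun v : ℝ => E * Real.exp (-(1/4 : ℝ) * v ^ 2)) :=
    (integrable_exp_neg_mul_sq (by norm_num : (0:ℝ) < 1/4)).const_mul E
  refine hbase.mono' hcont.aestronglyMeasurable (Filter.Eventually.of_forall fun v => ?_)
  have h1 : (0:ℝ) < 1 + v ^ 2 := by positivity
  have hrw : (1 + v ^ 2) ^ q = Real.exp (q * Real.log (1 + v ^ 2)) := by
    rw [Real.rpow_def_of_pos h1, mul_comm]
  have hnn : 0 ≤ (1 + v ^ 2) ^ q * Real.exp (b * |v| - v ^ 2 / 2) := by positivity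
  rw [Real.norm_eq_abs, abs_of_nonneg hnn, hrw, ← Real.exp_add, hE, ← Real.exp_add,
    Real.exp_le_exp]
  have hlog : Real.log (1 + v ^ 2) ≤ (1 + v ^ 2) / (16 * q) - 1 + Real.log (16 * q) := by
    have h2 : (0:ℝ) < 16 * q := by positivity
    have := Real.log_le_sub_one_of_pos (show (0:ℝ) < (1 + v ^ 2) / (16 * q) by positivity)
    rw [Real.log_div (ne_of_gt h1) (ne_of_gt h2)] at this
    linarith
  have hmul : q * ((1 + v ^ 2) / (16 * q)) = (1 + v ^ 2) / 16 := by
    field_simp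
  have hqlog : q * Real.log (1 + v ^ 2) ≤ (1 + v ^ 2) / 16 - q + q * Real.log (16 * q) := by
    have := mul_le_mul_of_nonneg_left hlog (le_of_lt hq0)
    nlinarith [this]
  have habs : b * |v| ≤ 3 / 16 * v ^ 2 + 4 / 3 * b ^ 2 := by
    nlinarith [sq_nonneg (|v| - 8 / 3 * b), sq_abs v, abs_nonneg v]
  nlinarith [habs, hqlog]

set_option maxHeartbeats 2000000 in
theorem lq_bound_ydtdyPsi (a : ℝ) (ha : 0 < a)
    (T ℓ L q : ℝ) (hT : 0 < T) (hℓ : 0 < ℓ) (hℓL : ℓ < L) (hq : 1 ≤ q) :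
    ∃ C : ℝ, 0 < C ∧ ∀ t ∈ Set.Ioc (0:ℝ) T, ∀ x ∈ Set.Icc ℓ L,
      (∫ y in Set.Ioi (0:ℝ),
          |(1 / (2 * a * t) - theta a x y t / (2 * t)
              - (theta a x y t) ^ 2 / (2 * a * t ^ 2)) * heatK t (theta a x y t)| ^ q)
        ≤ C * t ^ (-(3 * q - 1) / 2) := by
  have hL0 : 0 < L := lt_trans hℓ hℓL
  have hq0 : (0:ℝ) ≤ q := le_trans zero_le_one hq
  set b : ℝ := a * Real.sqrt T with hb_def
  set Kc : ℝ := 1 / a + Real.sqrt T with hK_def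
  have hKc : 0 < Kc := by positivity
  set D : ℝ := a * L * Kc ^ q * ((Real.sqrt (2 * Real.pi))⁻¹) ^ q with hD_def
  have hD : 0 < D := by positivity
  set J : ℝ → ℝ := fun v => (1 + v ^ 2) ^ q * Real.exp (b * |v| - v ^ 2 / 2) with hJ_def
  clear_value b Kc D J
  have hJint : Integrable J := by rw [hJ_def]; exact maj_integrable q b hq
  have hJnn : 0 ≤ ∫ v, J v := integral_nonneg fun v => by simp only [hJ_def]; positivity
  have hDJ : 0 ≤ D * ∫ v, J v := mul_nonneg hD.le hJnn
  refine ⟨D * (∫ v, J v) + 1, by positivity, ?_⟩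
  rintro t ⟨ht1, ht2⟩ x ⟨hx1, hx2⟩
  have hx0 : 0 < x := lt_of_lt_of_le hℓ hx1
  set s : ℝ := Real.sqrt t with hs_def
  have hs : 0 < s := Real.sqrt_pos.mpr ht1
  have hsq : s ^ 2 = t := Real.sq_sqrt ht1.le
  have hsT : s ≤ Real.sqrt T := Real.sqrt_le_sqrt ht2
  set c : ℝ := Real.log x / a - a * t / 2 with hc_def
  set f : ℝ → ℝ := fun v => Real.exp (a * (c - s * v)) with hf_def
  set F : ℝ → ℝ := fun y =>
    |(1 / (2 * a * t) - theta a x y t / (2 * t)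
        - (theta a x y t) ^ 2 / (2 * a * t ^ 2)) * heatK t (theta a x y t)| ^ q with hF_def
  clear_value s c f F
  have himg : f '' Set.univ = Set.Ioi (0:ℝ) := by
    rw [Set.image_univ]
    ext y
    constructor
    · rintro ⟨v, rfl⟩
      simp only [hf_def, Set.mem_Ioi]
      exact Real.exp_pos _
    · intro hy
      refine ⟨(c - Real.log y / a) / s, ?_⟩
      simp only [hf_def]
      rw [show a * (c - s * ((c - Real.log y / a) / s)) = Real.log y by
        field_simp; ring]
      exact Real.exp_log hy
  have hderiv : ∀ v ∈ Set.univ, HasDerivWithinAt f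
      (Real.exp (a * (c - s * v)) * (-(a * s))) Set.univ v := by
    intro v _
    have h1 : HasDerivAt (fun v : ℝ => a * (c - s * v)) (-(a * s)) v := by
      have h2 := (((hasDerivAt_id v).const_mul s).const_sub c).const_mul a
      simpa [mul_comm, mul_assoc] using h2
    rw [hf_def]
    exact h1.exp.hasDerivWithinAt
  have hinj : Set.InjOn f Set.univ := by
    intro v1 _ v2 _ h
    simp only [hf_def] at h
    have h1 := Real.exp_injective h
    have h2 : s * v1 = s * v2 := by
      have := mul_left_cancel₀ (ne_of_gt ha) h1
      linarith
    exact mul_left_cancel₀ (ne_of_gt hs) h2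
  have hcov : (∫ y in Set.Ioi (0:ℝ), F y)
      = ∫ v, |Real.exp (a * (c - s * v)) * (-(a * s))| • F (f v) := by
    rw [← himg, integral_image_eq_integral_abs_deriv_smul MeasurableSet.univ hderiv hinj F,
      Measure.restrict_univ]
  have htheta : ∀ v : ℝ, theta a x (f v) t = s * v := by
    intro v
    simp only [hf_def, theta, Real.log_exp, hc_def]
    field_simp
    ring
  have hR1 : t⁻¹ * s⁻¹ = t ^ (-(3/2) : ℝ) := by
    rw [hs_def, Real.sqrt_eq_rpow, ← Real.rpow_neg_one t, ← Real.rpow_neg ht1.le,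
      ← Real.rpow_add ht1]
    norm_num
  have hsR : s * (t⁻¹ ^ q * s⁻¹ ^ q) = t ^ (-(3 * q - 1) / 2) := by
    rw [← Real.mul_rpow (by positivity) (by positivity), hR1, ← Real.rpow_mul ht1.le,
      hs_def, Real.sqrt_eq_rpow, ← Real.rpow_add ht1]
    congr 1
    ring
  have key : ∀ v : ℝ,
      |Real.exp (a * (c - s * v)) * (-(a * s))| • F (f v)
        ≤ t ^ (-(3 * q - 1) / 2) * (D * J v) := by
    intro v
    rw [smul_eq_mul]
    simp only [hF_def, htheta v]
    set e2 : ℝ := Real.exp (-(v ^ 2) / 2) with he2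
    have he2pos : 0 < e2 := Real.exp_pos _
    have habs1 : |Real.exp (a * (c - s * v)) * (-(a * s))|
        = a * s * Real.exp (a * (c - s * v)) := by
      rw [abs_mul, abs_of_pos (Real.exp_pos _), abs_neg, abs_of_pos (by positivity : 0 < a * s)]
      ring
    have hec : Real.exp (a * (c - s * v)) ≤ L * Real.exp (b * |v|) := by
      have hxl : Real.log x ≤ Real.log L := Real.log_le_log hx0 hx2
      have hac : a * c ≤ Real.log L := by
        have h4 : a * c = Real.log x - a ^ 2 * t / 2 := by
          rw [hc_def]; field_simp
        nlinarith [mul_nonneg (sq_nonneg a) ht1.le]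
      have h5 : -(a * s * v) ≤ b * |v| := by
        have h6 : a * s * (-v) ≤ a * s * |v| :=
          mul_le_mul_of_nonneg_left (neg_le_abs v) (by positivity)
        have h7 : a * s * |v| ≤ b * |v| :=
          mul_le_mul_of_nonneg_right
            (by rw [hb_def]; exact mul_le_mul_of_nonneg_left hsT ha.le) (abs_nonneg v)
        nlinarith [h6, h7]
      have h8 : a * (c - s * v) ≤ Real.log L + b * |v| := by nlinarith [hac, h5]
      calc Real.exp (a * (c - s * v)) ≤ Real.exp (Real.log L + b * |v|) :=
            Real.exp_le_exp.mpr h8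
        _ = L * Real.exp (b * |v|) := by rw [Real.exp_add, Real.exp_log hL0]
    have hheat : heatK t (s * v) = (Real.sqrt (2 * Real.pi))⁻¹ * s⁻¹ * e2 := by
      unfold heatK
      rw [Real.sqrt_mul (by positivity) t, mul_inv, ← hs_def, he2]
      congr 1
      rw [mul_pow, hsq]
      field_simp
    have hPeq : 1 / (2 * a * t) - s * v / (2 * t) - (s * v) ^ 2 / (2 * a * t ^ 2)
        = t⁻¹ * (1 / (2 * a) - s * v / 2 - v ^ 2 / (2 * a)) := by
      rw [mul_pow, hsq]
      field_simp
    have hW : |1 / (2 * a) - s * v / 2 - v ^ 2 / (2 * a)| ≤ Kc * (1 + v ^ 2) := by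
      have hv1 : |v| ≤ 1 + v ^ 2 := by nlinarith [sq_abs v, sq_nonneg (|v| - 1)]
      have h6 : |s * v| ≤ Real.sqrt T * (1 + v ^ 2) := by
        rw [abs_mul, abs_of_pos hs]
        nlinarith [hs.le, hsT, abs_nonneg v, Real.sqrt_nonneg T, hv1]
      obtain ⟨h7, h8⟩ := abs_le.mp h6
      have hia : (0:ℝ) < 1 / a := by positivity
      have e1 : 1 / (2 * a) = (1 / a) / 2 := by field_simp
      have e2' : v ^ 2 / (2 * a) = (1 / a) * v ^ 2 / 2 := by
        rw [one_div, div_eq_mul_inv, div_eq_mul_inv, mul_inv]; ring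
      rw [abs_le, hK_def, e1, e2']
      constructor
      · nlinarith [sq_nonneg v, hia, Real.sqrt_nonneg T, mul_nonneg hia.le (sq_nonneg v),
          mul_nonneg (Real.sqrt_nonneg T) (sq_nonneg v)]
      · nlinarith [sq_nonneg v, hia, Real.sqrt_nonneg T, mul_nonneg hia.le (sq_nonneg v),
          mul_nonneg (Real.sqrt_nonneg T) (sq_nonneg v)]
    have hheat_nn : 0 ≤ heatK t (s * v) := by rw [hheat]; positivity
    have hcore : |(1 / (2 * a * t) - s * v / (2 * t) - (s * v) ^ 2 / (2 * a * t ^ 2))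
          * heatK t (s * v)|
        ≤ (t⁻¹ * s⁻¹) * ((Real.sqrt (2 * Real.pi))⁻¹ * (Kc * (1 + v ^ 2)) * e2) := by
      rw [abs_mul, abs_of_nonneg hheat_nn, hPeq, hheat, abs_mul,
        abs_of_pos (inv_pos.mpr ht1)]
      have h9 : (0:ℝ) ≤ t⁻¹ * s⁻¹ * (Real.sqrt (2 * Real.pi))⁻¹ * e2 := by positivity
      nlinarith [mul_le_mul_of_nonneg_left hW h9]
    have hcoreq : |(1 / (2 * a * t) - s * v / (2 * t) - (s * v) ^ 2 / (2 * a * t ^ 2))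
          * heatK t (s * v)| ^ q
        ≤ t⁻¹ ^ q * s⁻¹ ^ q
            * (((Real.sqrt (2 * Real.pi))⁻¹) ^ q * (Kc ^ q * ((1 + v ^ 2) ^ q * e2))) := by
      refine (Real.rpow_le_rpow (abs_nonneg _) hcore hq0).trans ?_
      rw [Real.mul_rpow (by positivity) (by positivity),
        Real.mul_rpow (by positivity) (by positivity),
        Real.mul_rpow (by positivity) (by positivity),
        Real.mul_rpow (by positivity) (by positivity),
        Real.mul_rpow (by positivity) (by positivity)]
      have he2q : e2 ^ q ≤ e2 := by
        have h11 : e2 ≤ 1 := by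
          rw [he2]
          exact Real.exp_le_one_iff.mpr (by nlinarith [sq_nonneg v])
        calc e2 ^ q ≤ e2 ^ (1:ℝ) :=
              Real.rpow_le_rpow_of_exponent_ge he2pos h11 hq
          _ = e2 := Real.rpow_one e2
      nlinarith [mul_le_mul_of_nonneg_left he2q
        (by positivity : (0:ℝ) ≤ t⁻¹ ^ q * s⁻¹ ^ q * (((Real.sqrt (2 * Real.pi))⁻¹) ^ q
          * (Kc ^ q * (1 + v ^ 2) ^ q)))]
    have hnn2 : (0:ℝ) ≤ |(1 / (2 * a * t) - s * v / (2 * t)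
        - (s * v) ^ 2 / (2 * a * t ^ 2)) * heatK t (s * v)| ^ q :=
      Real.rpow_nonneg (abs_nonneg _) q
    calc |Real.exp (a * (c - s * v)) * (-(a * s))|
          * |(1 / (2 * a * t) - s * v / (2 * t) - (s * v) ^ 2 / (2 * a * t ^ 2))
              * heatK t (s * v)| ^ q
        = a * s * Real.exp (a * (c - s * v))
          * |(1 / (2 * a * t) - s * v / (2 * t) - (s * v) ^ 2 / (2 * a * t ^ 2))
              * heatK t (s * v)| ^ q := by rw [habs1]
      _ ≤ (a * s * (L * Real.exp (b * |v|)))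
          * (t⁻¹ ^ q * s⁻¹ ^ q
            * (((Real.sqrt (2 * Real.pi))⁻¹) ^ q * (Kc ^ q * ((1 + v ^ 2) ^ q * e2)))) := by
          apply mul_le_mul (mul_le_mul_of_nonneg_left hec (by positivity)) hcoreq hnn2
            (by positivity)
      _ = t ^ (-(3 * q - 1) / 2) * (D * J v) := by
          rw [← hsR, hD_def, hJ_def]
          have hee : Real.exp (b * |v| - v ^ 2 / 2) = Real.exp (b * |v|) * e2 := by
            rw [he2, ← Real.exp_add]
            congr 1
            ring
          simp only [hee]
          ring
  rw [hcov]
  have hInt2 : Integrable (fun v => t ^ (-(3 * q - 1) / 2) * (D * J v)) :=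
    (hJint.const_mul D).const_mul _
  calc (∫ v, |Real.exp (a * (c - s * v)) * (-(a * s))| • F (f v))
      ≤ ∫ v, t ^ (-(3 * q - 1) / 2) * (D * J v) := by
        apply integral_mono_of_nonneg
        · refine Filter.Eventually.of_forall fun v => ?_
          simp only [Pi.zero_apply, smul_eq_mul, hF_def]
          positivity
        · exact hInt2
        · exact Filter.Eventually.of_forall key
    _ = t ^ (-(3 * q - 1) / 2) * (D * ∫ v, J v) := by
        rw [integral_const_mul, integral_const_mul]
    _ ≤ (D * (∫ v, J v) + 1) * t ^ (-(3 * q - 1) / 2) := by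
        nlinarith [Real.rpow_pos_of_pos ht1 (-(3 * q - 1) / 2), hDJ]
end

section
/- For every T ∈ (0,∞), every 0 < ℓ < L < ∞, and every q ∈ [1,∞), there exists a constant C ∈ (0,∞) (depending only on a, q, ℓ, L, T) such that for all t ∈ (0,T] and all x ∈ [ℓ,L]: ∫_0^∞ | ( θ(x,y,t)/(a² x t) ) p_t(θ(x,y,t)) |^q dy ≤ C t^{-q + 1/2}. -/
open MeasureTheory Real Set

lemma exp_change (g : ℝ → ℝ) :
    (∫ y in Set.Ioi (0:ℝ), g y) = ∫ u : ℝ, Real.exp u * g (Real.exp u) := by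
  have h := integral_image_eq_integral_abs_deriv_smul (s := (Set.univ : Set ℝ))
    MeasurableSet.univ (fun x _ => (Real.hasDerivAt_exp x).hasDerivWithinAt)
    (Real.exp_injective.injOn) g
  simpa [Set.image_univ, Real.range_exp, abs_of_pos (Real.exp_pos _), smul_eq_mul] using h

lemma exp_change_integrable (g : ℝ → ℝ)
    (h : Integrable (fun u : ℝ => Real.exp u * g (Real.exp u))) :
    IntegrableOn g (Set.Ioi (0:ℝ)) := by
  have h2 := integrableOn_image_iff_integrableOn_abs_deriv_smul (s := (Set.univ : Set ℝ))
    MeasurableSet.univ (fun x _ => (Real.hasDerivAt_exp x).hasDerivWithinAt)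
    (Real.exp_injective.injOn) g
  rw [Set.image_univ, Real.range_exp] at h2
  rw [h2]
  simpa [abs_of_pos (Real.exp_pos _), smul_eq_mul, integrableOn_univ] using h

lemma gauss_shift (b r : ℝ) (hb : 0 < b) :
    ∫ u : ℝ, Real.exp (-b * (u - r) ^ 2 + u)
      = Real.exp (r + 1 / (4 * b)) * Real.sqrt (Real.pi / b) := by
  have key : ∀ u : ℝ, -b * (u - r) ^ 2 + u
      = (r + 1 / (4 * b)) + (-b * (u - (r + 1 / (2 * b))) ^ 2) := by
    intro u; field_simp; ring
  simp_rw [key, Real.exp_add]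
  rw [MeasureTheory.integral_const_mul]
  congr 1
  rw [show (∫ u : ℝ, Real.exp (-b * (u - (r + 1 / (2 * b))) ^ 2))
      = ∫ u : ℝ, Real.exp (-b * u ^ 2) from
    integral_sub_right_eq_self (fun u => Real.exp (-b * u ^ 2)) _]
  exact integral_gaussian b

lemma gauss_shift_integrable (b r : ℝ) (hb : 0 < b) :
    Integrable (fun u : ℝ => Real.exp (-b * (u - r) ^ 2 + u)) := by
  have key : ∀ u : ℝ, -b * (u - r) ^ 2 + u
      = (r + 1 / (4 * b)) + (-b * (u - (r + 1 / (2 * b))) ^ 2) := by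
    intro u; field_simp; ring
  simp_rw [key, Real.exp_add]
  exact ((integrable_exp_neg_mul_sq hb).comp_sub_right _).const_mul _

lemma abs_mul_exp_le (t z : ℝ) (ht : 0 < t) :
    |z| * Real.exp (-z ^ 2 / (4 * t)) ≤ Real.sqrt (2 * t) := by
  have hsq : Real.sqrt (2 * t) ^ 2 = 2 * t := Real.sq_sqrt (by positivity)
  have hspos : 0 < Real.sqrt (2 * t) := Real.sqrt_pos.mpr (by positivity)
  rw [show -z ^ 2 / (4 * t) = -(z ^ 2 / (4 * t)) by ring, Real.exp_neg,
    mul_inv_le_iff₀' (Real.exp_pos _)]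
  have hee : 1 + z ^ 2 / (4 * t) ≤ Real.exp (z ^ 2 / (4 * t)) := by
    have := Real.add_one_le_exp (z ^ 2 / (4 * t)); linarith
  have key : |z| ≤ Real.sqrt (2 * t) * (1 + z ^ 2 / (4 * t)) := by
    have heq : Real.sqrt (2 * t) * (1 + z ^ 2 / (4 * t))
        = (4 * t * Real.sqrt (2 * t) + Real.sqrt (2 * t) * z ^ 2) / (4 * t) := by
      field_simp
    rw [heq, le_div_iff₀ (by positivity)]
    have e0 : 0 ≤ Real.sqrt (2 * t) * (Real.sqrt (2 * t) - |z|) ^ 2 :=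
      mul_nonneg hspos.le (sq_nonneg _)
    have e1 : Real.sqrt (2 * t) * (Real.sqrt (2 * t) - |z|) ^ 2
        = (2 * t) * Real.sqrt (2 * t) - 2 * (2 * t) * |z| + Real.sqrt (2 * t) * z ^ 2 := by
      have h2 : Real.sqrt (2 * t) * (Real.sqrt (2 * t) - |z|) ^ 2
          = Real.sqrt (2 * t) ^ 2 * Real.sqrt (2 * t) - 2 * Real.sqrt (2 * t) ^ 2 * |z|
            + Real.sqrt (2 * t) * z ^ 2 := by rw [← sq_abs z]; ring
      rw [h2, hsq]
    nlinarith [mul_nonneg ht.le hspos.le]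
  calc |z| ≤ Real.sqrt (2 * t) * (1 + z ^ 2 / (4 * t)) := key
    _ ≤ Real.sqrt (2 * t) * Real.exp (z ^ 2 / (4 * t)) :=
        mul_le_mul_of_nonneg_left hee hspos.le
    _ = Real.exp (z ^ 2 / (4 * t)) * Real.sqrt (2 * t) := mul_comm _ _

lemma pointwise_base_bound (a t x ℓ z : ℝ) (ha : 0 < a) (ht : 0 < t) (hℓ : 0 < ℓ)
    (hx : ℓ ≤ x) :
    |(z / (a ^ 2 * x * t)) * heatK t z| ≤ (a ^ 2 * ℓ)⁻¹ * t⁻¹ * Real.exp (-z ^ 2 / (4 * t)) := by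
  have hx0 : 0 < x := lt_of_lt_of_le hℓ hx
  have hsplit : Real.exp (-z ^ 2 / (2 * t))
      = Real.exp (-z ^ 2 / (4 * t)) * Real.exp (-z ^ 2 / (4 * t)) := by
    rw [← Real.exp_add]; congr 1; ring
  have habs : |(z / (a ^ 2 * x * t)) * heatK t z|
      = |z| * (a ^ 2 * x * t)⁻¹ *
        ((Real.sqrt (2 * Real.pi * t))⁻¹ * Real.exp (-z ^ 2 / (2 * t))) := by
    rw [heatK, abs_mul, abs_div, abs_of_pos (show (0:ℝ) < a ^ 2 * x * t by positivity),
      abs_mul, abs_of_pos (inv_pos.mpr (Real.sqrt_pos.mpr (by positivity))),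
      abs_of_pos (Real.exp_pos _)]
    ring_nf
  have hclaim : |z| * Real.exp (-z ^ 2 / (4 * t)) ≤ Real.sqrt (2 * Real.pi * t) := by
    refine le_trans (abs_mul_exp_le t z ht) (Real.sqrt_le_sqrt ?_)
    nlinarith [Real.pi_gt_three]
  calc |(z / (a ^ 2 * x * t)) * heatK t z|
      = (|z| * Real.exp (-z ^ 2 / (4 * t))) * (Real.sqrt (2 * Real.pi * t))⁻¹ *
          ((a ^ 2 * x * t)⁻¹ * Real.exp (-z ^ 2 / (4 * t))) := by
        rw [habs, hsplit]; ring
    _ ≤ 1 * ((a ^ 2 * x * t)⁻¹ * Real.exp (-z ^ 2 / (4 * t))) := by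
        apply mul_le_mul_of_nonneg_right _ (by positivity)
        calc (|z| * Real.exp (-z ^ 2 / (4 * t))) * (Real.sqrt (2 * Real.pi * t))⁻¹
            ≤ Real.sqrt (2 * Real.pi * t) * (Real.sqrt (2 * Real.pi * t))⁻¹ :=
              mul_le_mul_of_nonneg_right hclaim (by positivity)
          _ = 1 := mul_inv_cancel₀ (ne_of_gt (Real.sqrt_pos.mpr (by positivity)))
    _ ≤ (a ^ 2 * ℓ)⁻¹ * t⁻¹ * Real.exp (-z ^ 2 / (4 * t)) := by
        rw [one_mul]
        apply mul_le_mul_of_nonneg_right _ (Real.exp_pos _).le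
        rw [show (a ^ 2 * x * t)⁻¹ = (a ^ 2 * x)⁻¹ * t⁻¹ by rw [mul_inv]]
        apply mul_le_mul_of_nonneg_right _ (by positivity)
        apply inv_anti₀ (by positivity)
        nlinarith

theorem lq_bound_ydxdyPsi (a : ℝ) (ha : 0 < a)
    (T ℓ L q : ℝ) (hT : 0 < T) (hℓ : 0 < ℓ) (hℓL : ℓ < L) (hq : 1 ≤ q) :
    ∃ C : ℝ, 0 < C ∧ ∀ t ∈ Set.Ioc (0:ℝ) T, ∀ x ∈ Set.Icc ℓ L,
      (∫ y in Set.Ioi (0:ℝ),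
          |(theta a x y t / (a ^ 2 * x * t)) * heatK t (theta a x y t)| ^ q)
        ≤ C * t ^ (-q + 1 / 2) := by
  have hq0 : (0:ℝ) < q := lt_of_lt_of_le one_pos hq
  set D : ℝ := ((a ^ 2 * ℓ)⁻¹) ^ q with hD
  set M1 : ℝ := Real.exp (|Real.log L| + a ^ 2 * T) with hM1
  set S : ℝ := Real.sqrt (4 * Real.pi * a ^ 2) with hS
  have hDpos : 0 < D := Real.rpow_pos_of_pos (inv_pos.mpr (by positivity)) q
  have hSpos : 0 < S := Real.sqrt_pos.mpr (by positivity)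
  refine ⟨D * (M1 * S), by positivity, ?_⟩
  rintro t ⟨ht0, htT⟩ x ⟨hxl, hxL⟩
  have hx0 : 0 < x := lt_of_lt_of_le hℓ hxl
  set c : ℝ := Real.log x / a - a * t / 2 with hc
  set b : ℝ := q / (4 * t) with hb
  have hbpos : 0 < b := by positivity
  set b2 : ℝ := b / a ^ 2 with hb2
  have hb2pos : 0 < b2 := by positivity
  set g : ℝ → ℝ := fun y => Real.exp (-b * (c - Real.log y / a) ^ 2) with hg
  -- the transformed integrand
  have hcomp : ∀ u : ℝ, Real.exp u * g (Real.exp u)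
      = Real.exp (-b2 * (u - a * c) ^ 2 + u) := by
    intro u
    simp only [hg, Real.log_exp]
    rw [← Real.exp_add]
    congr 1
    have h1 : c - u / a = -((u - a * c) / a) := by field_simp; ring
    rw [h1, neg_sq, div_pow]
    rw [hb2]
    ring
  -- integrability of g
  have hgint : IntegrableOn g (Set.Ioi (0:ℝ)) := by
    apply exp_change_integrable
    have := gauss_shift_integrable b2 (a * c) hb2pos
    exact this.congr (Filter.Eventually.of_forall fun u => (hcomp u).symm)
  -- value of ∫ g
  have hgval : (∫ y in Set.Ioi (0:ℝ), g y)
      = Real.exp (a * c + 1 / (4 * b2)) * Real.sqrt (Real.pi / b2) := by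
    rw [exp_change g]
    simp_rw [hcomp]
    exact gauss_shift b2 (a * c) hb2pos
  -- bound on the value of ∫ g
  have hgbound : (∫ y in Set.Ioi (0:ℝ), g y) ≤ M1 * (S * Real.sqrt t) := by
    rw [hgval]
    have h1 : Real.exp (a * c + 1 / (4 * b2)) ≤ M1 := by
      rw [hM1]
      apply Real.exp_le_exp.mpr
      have hac : a * c = Real.log x - a ^ 2 * t / 2 := by rw [hc]; field_simp
      have hinv : 1 / (4 * b2) = a ^ 2 * t / q := by
        rw [hb2, hb]; field_simp
      rw [hac, hinv]
      have hlx : Real.log x ≤ |Real.log L| :=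
        le_trans (Real.log_le_log hx0 hxL) (le_abs_self _)
      have h3 : a ^ 2 * t / q ≤ a ^ 2 * T := by
        calc a ^ 2 * t / q ≤ a ^ 2 * t / 1 := by
              apply div_le_div_of_nonneg_left (by positivity) one_pos hq
          _ = a ^ 2 * t := by ring
          _ ≤ a ^ 2 * T := by nlinarith
      nlinarith [sq_nonneg a, ht0.le]
    have h2 : Real.sqrt (Real.pi / b2) ≤ S * Real.sqrt t := by
      have hval : Real.pi / b2 = 4 * Real.pi * a ^ 2 * t / q := by
        rw [hb2, hb]; field_simp
      have hle : Real.pi / b2 ≤ 4 * Real.pi * a ^ 2 * t := by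
        rw [hval]
        exact div_le_self (by positivity) hq
      calc Real.sqrt (Real.pi / b2) ≤ Real.sqrt (4 * Real.pi * a ^ 2 * t) :=
            Real.sqrt_le_sqrt hle
        _ = S * Real.sqrt t := by
            rw [hS, ← Real.sqrt_mul (by positivity)]
    exact mul_le_mul h1 h2 (Real.sqrt_nonneg _) (Real.exp_pos _).le
  -- pointwise bound
  have hpt : ∀ y : ℝ,
      |(theta a x y t / (a ^ 2 * x * t)) * heatK t (theta a x y t)| ^ q
        ≤ D * (t⁻¹ ^ q * g y) := by
    intro y
    set θ : ℝ := theta a x y t with hθ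
    have hθc : θ = c - Real.log y / a := by rw [hθ, theta, hc]; ring
    have hbase : |(θ / (a ^ 2 * x * t)) * heatK t θ|
        ≤ (a ^ 2 * ℓ)⁻¹ * t⁻¹ * Real.exp (-θ ^ 2 / (4 * t)) :=
      pointwise_base_bound a t x ℓ θ ha ht0 hℓ hxl
    have hq' : (0:ℝ) ≤ q := hq0.le
    calc |(θ / (a ^ 2 * x * t)) * heatK t θ| ^ q
        ≤ ((a ^ 2 * ℓ)⁻¹ * t⁻¹ * Real.exp (-θ ^ 2 / (4 * t))) ^ q :=
          Real.rpow_le_rpow (abs_nonneg _) hbase hq'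
      _ = D * (t⁻¹ ^ q * g y) := by
          rw [Real.mul_rpow (by positivity) (Real.exp_pos _).le,
            Real.mul_rpow (by positivity) (by positivity), mul_assoc]
          congr 2
          simp only [hg]
          rw [← Real.exp_mul, ← hθc]
          congr 1
          rw [hb]
          field_simp
  -- assemble
  have hmono : (∫ y in Set.Ioi (0:ℝ),
      |(theta a x y t / (a ^ 2 * x * t)) * heatK t (theta a x y t)| ^ q)
      ≤ ∫ y in Set.Ioi (0:ℝ), D * (t⁻¹ ^ q * g y) := by
    apply integral_mono_of_nonneg
    · exact Filter.Eventually.of_forall fun y => Real.rpow_nonneg (abs_nonneg _) q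
    · exact (hgint.const_mul _).const_mul D
    · exact Filter.Eventually.of_forall fun y => hpt y
  have hval2 : (∫ y in Set.Ioi (0:ℝ), D * (t⁻¹ ^ q * g y))
      = D * t⁻¹ ^ q * ∫ y in Set.Ioi (0:ℝ), g y := by
    simp_rw [← mul_assoc]
    rw [MeasureTheory.integral_const_mul]
  have hfin : D * t⁻¹ ^ q * (M1 * (S * Real.sqrt t)) = D * (M1 * S) * t ^ (-q + 1/2) := by
    rw [Real.inv_rpow ht0.le, ← Real.rpow_neg ht0.le,
      Real.sqrt_eq_rpow, Real.rpow_add ht0]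
    ring
  calc (∫ y in Set.Ioi (0:ℝ),
      |(theta a x y t / (a ^ 2 * x * t)) * heatK t (theta a x y t)| ^ q)
      ≤ ∫ y in Set.Ioi (0:ℝ), D * (t⁻¹ ^ q * g y) := hmono
    _ = D * t⁻¹ ^ q * ∫ y in Set.Ioi (0:ℝ), g y := hval2
    _ ≤ D * t⁻¹ ^ q * (M1 * (S * Real.sqrt t)) := by
        apply mul_le_mul_of_nonneg_left hgbound (by positivity)
    _ = D * (M1 * S) * t ^ (-q + 1/2) := hfin
end

section
/- For every T ∈ (0,∞) and every m > 1, there exists a constant C ∈ (0,∞), depending only on a, T and m, such that for all y ∈ (0,∞) and all t ∈ (0,T]: ∫_0^∞ ( x q_t(x,y) )^m dx ≤ C y t^{-(m-1)/2}. -/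
open MeasureTheory Real Set

theorem xqker_moment_bound (a : ℝ) (ha : 0 < a) (T m : ℝ) (hT : 0 < T) (hm : 1 < m) :
    ∃ C : ℝ, 0 < C ∧ ∀ y ∈ Set.Ioi (0:ℝ), ∀ t ∈ Set.Ioc (0:ℝ) T,
      (∫ x in Set.Ioi (0:ℝ), (x * qker a t x y) ^ m) ≤ C * y * t ^ (-(m - 1) / 2) := by
  have hm0 : (0:ℝ) < m := lt_trans one_pos hm
  have h2pi : (0:ℝ) < 2 * Real.pi := by positivity
  refine ⟨a ^ (-(m-1)) * (2 * Real.pi) ^ (-(m-1)/2) * (Real.sqrt m)⁻¹, by positivity, ?_⟩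
  intro y hy t ht
  rw [Set.mem_Ioi] at hy
  obtain ⟨ht0, htT⟩ := ht
  have hu : (0:ℝ) < 2 * Real.pi * t := by positivity
  set s : ℝ := (Real.sqrt (2 * Real.pi * t))⁻¹ with hs
  have hspos : 0 < s := by positivity
  set f : ℝ → ℝ := fun v => y * Real.exp (a * v - a^2 * t / 2) with hf
  have hfpos : ∀ v, 0 < f v := fun v => by positivity
  have hderiv : ∀ v ∈ (Set.univ : Set ℝ), HasDerivWithinAt f (a * f v) Set.univ v := by
    intro v _
    have h1 : HasDerivAt (fun v : ℝ => a * v - a^2 * t / 2) a v := by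
      simpa using ((hasDerivAt_id v).const_mul a).sub_const (a^2 * t / 2)
    have h2 := (h1.exp.const_mul y)
    have h3 : y * (Real.exp (a * v - a^2 * t / 2) * a) = a * f v := by rw [hf]; ring
    exact (h3 ▸ h2).hasDerivWithinAt
  have hinj : Set.InjOn f Set.univ := by
    intro v _ w _ hvw
    have h1 : Real.exp (a * v - a^2 * t / 2) = Real.exp (a * w - a^2 * t / 2) :=
      mul_left_cancel₀ hy.ne' hvw
    have h2 := Real.exp_injective h1
    have : a * v = a * w := by linarith
    exact mul_left_cancel₀ ha.ne' this
  have himg : f '' Set.univ = Set.Ioi (0:ℝ) := by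
    ext x
    simp only [Set.image_univ, Set.mem_range, Set.mem_Ioi]
    constructor
    · rintro ⟨v, rfl⟩; exact hfpos v
    · intro hx
      refine ⟨(Real.log (x / y) + a^2 * t / 2) / a, ?_⟩
      have h4 : a * ((Real.log (x / y) + a^2 * t / 2) / a) - a^2*t/2 = Real.log (x / y) := by
        field_simp
        ring
      rw [hf]; dsimp only; rw [h4, Real.exp_log (by positivity)]
      field_simp
  have key := integral_image_eq_integral_abs_deriv_smul (F := ℝ) MeasurableSet.univ hderiv hinj
      (fun x => (x * qker a t x y) ^ m)
  rw [himg, MeasureTheory.setIntegral_univ] at key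
  rw [key]
  set b : ℝ := m / (2 * t) with hb
  set c : ℝ := a * t / m with hc
  set E : ℝ := Real.exp (a^2*t/(2*m) - a^2*t/2) with hE
  set K : ℝ := a * y * (a⁻¹ * s)^m * E with hK
  have hpt : ∀ v : ℝ, |a * f v| • (f v * qker a t (f v) y) ^ m
      = K * Real.exp (-b * (v - c)^2) := by
    intro v
    have hfv := hfpos v
    have hlog : Real.log (f v) = Real.log y + (a * v - a^2 * t / 2) := by
      rw [hf]; dsimp only; rw [Real.log_mul hy.ne' (Real.exp_ne_zero _), Real.log_exp]
    have harg : Real.log (f v) / a - Real.log y / a + a * t / 2 = v := by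
      rw [hlog]; field_simp; ring
    have hq : f v * qker a t (f v) y = a⁻¹ * heatK t v := by
      rw [qker, harg]
      field_simp
    rw [smul_eq_mul, abs_of_pos (by positivity), hq, heatK]
    rw [show (Real.sqrt (2 * Real.pi * t))⁻¹ = s from rfl]
    rw [show a⁻¹ * (s * Real.exp (-v^2 / (2*t))) = (a⁻¹ * s) * Real.exp (-v^2 / (2*t)) by ring]
    rw [Real.mul_rpow (by positivity) (Real.exp_nonneg _), ← Real.exp_mul]
    rw [hK, hE, hf]
    dsimp only
    rw [show a * (y * Real.exp (a * v - a ^ 2 * t / 2)) *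
          ((a⁻¹ * s) ^ m * Real.exp (-v ^ 2 / (2 * t) * m))
        = a * y * (a⁻¹ * s) ^ m *
          (Real.exp (a * v - a ^ 2 * t / 2) * Real.exp (-v ^ 2 / (2 * t) * m)) by ring,
      show a * y * (a⁻¹*s)^m * Real.exp (a^2*t/(2*m) - a^2*t/2) * Real.exp (-b * (v-c)^2)
        = a * y * (a⁻¹*s)^m *
          (Real.exp (a^2*t/(2*m) - a^2*t/2) * Real.exp (-b * (v-c)^2)) by ring,
      ← Real.exp_add, ← Real.exp_add]
    congr 1
    rw [hb, hc]
    field_simp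
    congr 1; field_simp; ring
  rw [MeasureTheory.integral_congr_ae (Filter.Eventually.of_forall hpt),
    MeasureTheory.integral_const_mul]
  have hshift : (∫ v : ℝ, Real.exp (-b * (v - c)^2)) = ∫ v : ℝ, Real.exp (-b * v^2) :=
    MeasureTheory.integral_sub_right_eq_self (fun w => Real.exp (-b * w^2)) c
  rw [hshift, integral_gaussian]
  have hπb : Real.pi / b = 2 * Real.pi * t / m := by rw [hb]; field_simp
  rw [hπb, Real.sqrt_div hu.le]
  -- constant computation
  have hA : a * (a⁻¹ * s)^m * (Real.sqrt (2 * Real.pi * t) / Real.sqrt m)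
      = a ^ (-(m-1)) * (2 * Real.pi) ^ (-(m-1)/2) * (Real.sqrt m)⁻¹ * t ^ (-(m - 1) / 2) := by
    have h1 : (a⁻¹ * s)^m = a ^ (-m) * (Real.sqrt (2 * Real.pi * t)) ^ (-m) := by
      rw [Real.mul_rpow (by positivity) hspos.le, hs,
        Real.inv_rpow ha.le, Real.inv_rpow (Real.sqrt_nonneg _),
        ← Real.rpow_neg ha.le, ← Real.rpow_neg (Real.sqrt_nonneg _)]
    rw [h1]
    have h2 : a * a ^ (-m) = a ^ (-(m-1)) := by
      rw [show -(m-1) = 1 + -m by ring, Real.rpow_add ha, Real.rpow_one]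
    have h3 : Real.sqrt (2 * Real.pi * t) ^ (-m) * Real.sqrt (2 * Real.pi * t)
        = (2 * Real.pi) ^ (-(m-1)/2) * t ^ (-(m-1)/2) := by
      nth_rewrite 2 [← Real.rpow_one (Real.sqrt (2 * Real.pi * t))]
      rw [← Real.rpow_add (Real.sqrt_pos.mpr hu), Real.sqrt_eq_rpow,
        ← Real.rpow_mul hu.le, show 1 / 2 * (-m + 1) = -(m-1)/2 by ring,
        Real.mul_rpow h2pi.le ht0.le]
    calc a * (a ^ (-m) * Real.sqrt (2 * Real.pi * t) ^ (-m)) *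
          (Real.sqrt (2 * Real.pi * t) / Real.sqrt m)
        = (a * a ^ (-m)) *
          (Real.sqrt (2 * Real.pi * t) ^ (-m) * Real.sqrt (2 * Real.pi * t)) *
          (Real.sqrt m)⁻¹ := by ring
      _ = _ := by rw [h2, h3]; ring
  have hE1 : E ≤ 1 := by
    rw [hE, Real.exp_le_one_iff]
    have : a^2*t/(2*m) ≤ a^2*t/2 := by
      apply div_le_div_of_nonneg_left (by positivity) (by norm_num)
      linarith
    linarith
  have hEpos : 0 < E := Real.exp_pos _
  calc K * (Real.sqrt (2 * Real.pi * t) / Real.sqrt m)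
      = (a * (a⁻¹ * s)^m * (Real.sqrt (2 * Real.pi * t) / Real.sqrt m)) * y * E := by
        rw [hK]; ring
    _ = (a ^ (-(m-1)) * (2 * Real.pi) ^ (-(m-1)/2) * (Real.sqrt m)⁻¹ * t ^ (-(m - 1) / 2))
          * y * E := by rw [hA]
    _ ≤ (a ^ (-(m-1)) * (2 * Real.pi) ^ (-(m-1)/2) * (Real.sqrt m)⁻¹ * t ^ (-(m - 1) / 2))
          * y * 1 := by
        apply mul_le_mul_of_nonneg_left hE1
        positivity
    _ = a ^ (-(m-1)) * (2 * Real.pi) ^ (-(m-1)/2) * (Real.sqrt m)⁻¹ * y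
          * t ^ (-(m - 1) / 2) := by ring
end

section
/- Let γ ≥ 0, a > 0, and m ∈ ℝ with m > 2a + 1, and let j ∈ ℕ satisfy j·a > m − 2γ. For integers i ≥ j define B_{i,j} = ∏_{k=j+1}^{i} (2γ + ka)/(2γ + ka + m), with B_{j,j} = 1. Then for all i ≥ j, B_{i,j} ≤ ( (2γ + a(i+1))/(2γ + a(j+1)) )^{-m/(2a)}, and moreover ∑_{i=j}^∞ B_{i,j} ≤ 2(2γ + a + 1)(j + 1). -/
open MeasureTheory Real Set

/-- Bernoulli inequality for nonpositive exponents. -/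
lemma bern_neg {r q : ℝ} (hr : 0 < r) (hq : q ≤ 0) : 1 + q * (r - 1) ≤ r ^ q := by
  rw [Real.rpow_def_of_pos hr]
  have h1 : q * (r - 1) ≤ q * Real.log r :=
    mul_le_mul_of_nonpos_left (Real.log_le_sub_one_of_pos hr) hq
  have h2 := Real.add_one_le_exp (Real.log r * q)
  nlinarith

/-- Single-factor bound. -/
lemma factor_le {a m x : ℝ} (ha : 0 < a) (hm : 0 < m) (hx : m ≤ x) :
    x / (x + m) ≤ ((x + a) / x) ^ (-(m / (2 * a))) := by
  have hx0 : 0 < x := hm.trans_le hx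
  have hr : 0 < (x + a) / x := by positivity
  have hq : -(m / (2 * a)) ≤ 0 := by
    have : 0 ≤ m / (2 * a) := by positivity
    linarith
  have hb := bern_neg hr hq
  have heq : 1 + (-(m / (2 * a))) * ((x + a) / x - 1) = (2 * x - m) / (2 * x) := by
    field_simp
    ring
  have h1 : x / (x + m) ≤ (2 * x - m) / (2 * x) := by
    rw [div_le_div_iff₀ (by linarith) (by linarith)]
    nlinarith
  rw [heq] at hb
  linarith

/-- Tangent-line bound for the convex function `x ^ (1 - p)`. -/
lemma tangent_le {u t p : ℝ} (hu : 0 < u) (ht : 0 < t) (hp : 1 < p) :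
    (p - 1) * t * (u + t) ^ (-p) ≤ u ^ (1 - p) - (u + t) ^ (1 - p) := by
  have hv0 : 0 < u + t := by linarith
  have hb := bern_neg (show 0 < u / (u + t) by positivity) (show (1:ℝ) - p ≤ 0 by linarith)
  rw [Real.div_rpow hu.le hv0.le] at hb
  have h1 : 1 + (1 - p) * (u / (u + t) - 1) = 1 + (p - 1) * t / (u + t) := by
    field_simp
    ring
  rw [h1] at hb
  have hvq : 0 < (u + t) ^ (1 - p) := Real.rpow_pos_of_pos hv0 _
  have h2 : (1 + (p - 1) * t / (u + t)) * (u + t) ^ (1 - p) ≤ u ^ (1 - p) :=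
    (le_div_iff₀ hvq).mp hb
  have h3 : (u + t) ^ (1 - p) / (u + t) = (u + t) ^ (-p) := by
    have h := Real.rpow_sub hv0 (1 - p) 1
    rw [Real.rpow_one] at h
    rw [← h]
    norm_num
  have h4 : (1 + (p - 1) * t / (u + t)) * (u + t) ^ (1 - p)
      = (u + t) ^ (1 - p) + (p - 1) * t * ((u + t) ^ (1 - p) / (u + t)) := by
    field_simp
  rw [h4, h3] at h2
  linarith

theorem gap_product_bounds (γ a m : ℝ) (hγ : 0 ≤ γ) (ha : 0 < a)
    (hm : 2 * a + 1 < m) (j : ℕ) (hj : m - 2 * γ < (j : ℝ) * a) :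
    (∀ i : ℕ, j ≤ i →
      (∏ k ∈ Finset.Icc (j + 1) i, (2 * γ + (k : ℝ) * a) / (2 * γ + (k : ℝ) * a + m))
        ≤ ((2 * γ + a * ((i : ℝ) + 1)) / (2 * γ + a * ((j : ℝ) + 1))) ^ (-(m / (2 * a)))) ∧
    (∑' i : ℕ,
        ∏ k ∈ Finset.Icc (j + 1) (j + i), (2 * γ + (k : ℝ) * a) / (2 * γ + (k : ℝ) * a + m))
      ≤ 2 * (2 * γ + a + 1) * ((j : ℝ) + 1) := by
  have hm0 : 0 < m := by linarith
  have hD : 0 < 2 * γ + a * ((j : ℝ) + 1) := by positivity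
  have hmD : m < 2 * γ + a * ((j : ℝ) + 1) := by nlinarith
  -- each factor is nonnegative
  have hfac_nonneg : ∀ k : ℕ, 0 ≤ (2 * γ + (k : ℝ) * a) / (2 * γ + (k : ℝ) * a + m) := by
    intro k
    have hk : 0 ≤ (k : ℝ) := Nat.cast_nonneg k
    apply div_nonneg <;> nlinarith
  have hprod_nonneg : ∀ s : Finset ℕ,
      0 ≤ ∏ k ∈ s, (2 * γ + (k : ℝ) * a) / (2 * γ + (k : ℝ) * a + m) :=
    fun s => Finset.prod_nonneg fun k _ => hfac_nonneg k
  -- Part 1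
  have part1 : ∀ i : ℕ, j ≤ i →
      (∏ k ∈ Finset.Icc (j + 1) i, (2 * γ + (k : ℝ) * a) / (2 * γ + (k : ℝ) * a + m))
        ≤ ((2 * γ + a * ((i : ℝ) + 1)) / (2 * γ + a * ((j : ℝ) + 1))) ^ (-(m / (2 * a))) := by
    intro i hi
    induction i, hi using Nat.le_induction with
    | base =>
        rw [Finset.Icc_eq_empty (by omega), Finset.prod_empty, div_self hD.ne', Real.one_rpow]
    | succ i hi ih =>
        rw [Finset.prod_Icc_succ_top (by omega)]
        have hcast : ((i + 1 : ℕ) : ℝ) = (i : ℝ) + 1 := by push_cast; ring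
        set X : ℝ := 2 * γ + a * ((i : ℝ) + 1) with hX
        have hXpos : 0 < X := by
          have : 0 ≤ (i : ℝ) := Nat.cast_nonneg i
          nlinarith
        have hmX : m ≤ X := by
          have hji : (j : ℝ) + 1 ≤ (i : ℝ) + 1 := by
            have := (Nat.cast_le (α := ℝ)).mpr hi; linarith
          nlinarith
        have hfac : (2 * γ + ((i + 1 : ℕ) : ℝ) * a) / (2 * γ + ((i + 1 : ℕ) : ℝ) * a + m)
            ≤ ((X + a) / X) ^ (-(m / (2 * a))) := by
          have h := factor_le ha hm0 hmX
          have hXe : 2 * γ + ((i + 1 : ℕ) : ℝ) * a = X := by rw [hcast, hX]; ring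
          rw [hXe]
          exact h
        have hmul : ((2 * γ + a * (((i + 1 : ℕ) : ℝ) + 1)) / (2 * γ + a * ((j : ℝ) + 1)))
              ^ (-(m / (2 * a)))
            = (X / (2 * γ + a * ((j : ℝ) + 1))) ^ (-(m / (2 * a)))
              * ((X + a) / X) ^ (-(m / (2 * a))) := by
          rw [← Real.mul_rpow (by positivity) (by positivity)]
          congr 1
          rw [hcast]
          field_simp
          ring
        rw [hmul]
        exact mul_le_mul ih hfac (hfac_nonneg _) (Real.rpow_nonneg (by positivity) _)
  refine ⟨part1, ?_⟩
  -- Part 2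
  set D : ℝ := 2 * γ + a * ((j : ℝ) + 1) with hDdef
  have hp1 : 1 < m / (2 * a) := by
    rw [lt_div_iff₀ (by linarith)]
    linarith
  set p : ℝ := m / (2 * a) with hpdef
  have hg : ∀ i : ℕ,
      (∏ k ∈ Finset.Icc (j + 1) (j + i), (2 * γ + (k : ℝ) * a) / (2 * γ + (k : ℝ) * a + m))
        ≤ ((D + a * (i : ℝ)) / D) ^ (-p) := by
    intro i
    have h := part1 (j + i) (Nat.le_add_right j i)
    have hb : 2 * γ + a * (((j + i : ℕ) : ℝ) + 1) = D + a * (i : ℝ) := by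
      push_cast; rw [hDdef]; ring
    rwa [hb] at h
  have hK : 0 < a * (p - 1) := by
    have : 0 < p - 1 := by linarith
    positivity
  -- telescoping bound on partial sums of g
  have htel : ∀ i : ℕ, ((D + a * ((i : ℝ) + 1)) / D) ^ (-p)
      ≤ (D / (a * (p - 1))) *
        (((D + a * (i : ℝ)) / D) ^ (1 - p) - ((D + a * ((i : ℝ) + 1)) / D) ^ (1 - p)) := by
    intro i
    have hi0 : 0 ≤ (i : ℝ) := Nat.cast_nonneg i
    have hu : 0 < (D + a * (i : ℝ)) / D := by positivity
    have ht : 0 < a / D := by positivity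
    have h := tangent_le hu ht hp1
    have he : (D + a * (i : ℝ)) / D + a / D = (D + a * ((i : ℝ) + 1)) / D := by
      field_simp; ring
    rw [he] at h
    have h5 : ((D + a * ((i : ℝ) + 1)) / D) ^ (-p)
        = D / (a * (p - 1)) * ((p - 1) * (a / D) * ((D + a * ((i : ℝ) + 1)) / D) ^ (-p)) := by
      have hp0 : p - 1 ≠ 0 := by linarith
      have hp0' : -1 + p ≠ 0 := by linarith
      field_simp
    rw [h5]
    exact mul_le_mul_of_nonneg_left h (by positivity)
  have hpart : ∀ n : ℕ,
      (∑ i ∈ Finset.range n,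
        ∏ k ∈ Finset.Icc (j + 1) (j + i), (2 * γ + (k : ℝ) * a) / (2 * γ + (k : ℝ) * a + m))
      ≤ 1 + D / (a * (p - 1)) := by
    intro n
    have hgsum : ∀ n : ℕ, (∑ i ∈ Finset.range n, ((D + a * ((i : ℝ))) / D) ^ (-p))
        ≤ 1 + D / (a * (p - 1)) := by
      intro n
      cases n with
      | zero => simp; positivity
      | succ n =>
          rw [Finset.sum_range_succ']
          have h0 : ((D + a * ((0 : ℕ) : ℝ)) / D) ^ (-p) = 1 := by
            norm_num
            rw [div_self hD.ne', Real.one_rpow]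
          rw [h0]
          have hsum2 : (∑ i ∈ Finset.range n, ((D + a * (((i + 1 : ℕ)) : ℝ)) / D) ^ (-p))
              ≤ (D / (a * (p - 1))) * (∑ i ∈ Finset.range n,
                (((D + a * (i : ℝ)) / D) ^ (1 - p) - ((D + a * ((i : ℝ) + 1)) / D) ^ (1 - p))) := by
            rw [Finset.mul_sum]
            apply Finset.sum_le_sum
            intro i _
            have := htel i
            have hc : (((i + 1 : ℕ)) : ℝ) = (i : ℝ) + 1 := by push_cast; ring
            rw [hc]
            exact this
          have hts : (∑ i ∈ Finset.range n,
              (((D + a * (i : ℝ)) / D) ^ (1 - p) - ((D + a * ((i : ℝ) + 1)) / D) ^ (1 - p)))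
              = ((D + a * ((0:ℕ) : ℝ)) / D) ^ (1 - p) - ((D + a * ((n:ℕ) : ℝ)) / D) ^ (1 - p) := by
            have := Finset.sum_range_sub' (fun i : ℕ => ((D + a * (i : ℝ)) / D) ^ (1 - p)) n
            simp only [Nat.cast_add, Nat.cast_one] at this ⊢
            exact this
          rw [hts] at hsum2
          have h00 : ((D + a * ((0:ℕ) : ℝ)) / D) ^ (1 - p) = 1 := by
            norm_num
            rw [div_self hD.ne', Real.one_rpow]
          rw [h00] at hsum2
          have hnn : 0 ≤ ((D + a * ((n:ℕ) : ℝ)) / D) ^ (1 - p) :=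
            Real.rpow_nonneg (by positivity) _
          have : (∑ i ∈ Finset.range n, ((D + a * (((i + 1 : ℕ)) : ℝ)) / D) ^ (-p))
              ≤ D / (a * (p - 1)) := by
            calc _ ≤ (D / (a * (p - 1))) * (1 - ((D + a * ((n:ℕ) : ℝ)) / D) ^ (1 - p)) := hsum2
              _ ≤ (D / (a * (p - 1))) * 1 := by
                  apply mul_le_mul_of_nonneg_left _ (by positivity)
                  linarith
              _ = D / (a * (p - 1)) := by ring
          linarith
    calc (∑ i ∈ Finset.range n,
        ∏ k ∈ Finset.Icc (j + 1) (j + i), (2 * γ + (k : ℝ) * a) / (2 * γ + (k : ℝ) * a + m))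
        ≤ (∑ i ∈ Finset.range n, ((D + a * ((i : ℝ))) / D) ^ (-p)) :=
          Finset.sum_le_sum fun i _ => hg i
      _ ≤ 1 + D / (a * (p - 1)) := hgsum n
  have hfinal : 1 + D / (a * (p - 1)) ≤ 2 * (2 * γ + a + 1) * ((j : ℝ) + 1) := by
    have hap : a * (p - 1) = m / 2 - a := by
      rw [hpdef]; field_simp
    have hKle : D / (a * (p - 1)) ≤ 2 * D := by
      rw [div_le_iff₀ hK]
      rw [hap]
      nlinarith
    have hj0 : 0 ≤ (j : ℝ) := Nat.cast_nonneg j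
    have hDe : D = 2 * γ + a * ((j : ℝ) + 1) := hDdef
    nlinarith
  exact le_trans
    (Real.tsum_le_of_sum_range_le (fun i => hprod_nonneg _) hpart) hfinal
end

section
/- For every x ∈ (0,∞) and all σ, σ' ∈ (0,∞): a² ∫_0^∞ y² q_σ(y,x) q_{σ'}(y,x) dy = ( a x / √(2π) ) · e^{-a²(σ+σ')/8} · (σ + σ')^{-1/2}. -/
open MeasureTheory Real Set

theorem qker_quadratic_covariation_density (a : ℝ) (ha : 0 < a) (x : ℝ) (hx : 0 < x)
    (σ σ' : ℝ) (hσ : 0 < σ) (hσ' : 0 < σ') :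
    a ^ 2 * (∫ y in Set.Ioi (0:ℝ), y ^ 2 * qker a σ y x * qker a σ' y x)
      = (a * x / Real.sqrt (2 * Real.pi)) * Real.exp (-a ^ 2 * (σ + σ') / 8)
          * (σ + σ') ^ (-(1:ℝ) / 2) := by
  have ha' : a ≠ 0 := ha.ne'
  have hx' : x ≠ 0 := hx.ne'
  have himg : Set.Ioi (0:ℝ) = (fun u : ℝ => x * Real.exp (a * u)) '' Set.univ := by
    ext y
    simp only [Set.mem_Ioi, Set.image_univ, Set.mem_range]
    constructor
    · intro hy
      refine ⟨(Real.log y - Real.log x) / a, ?_⟩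
      rw [mul_div_cancel₀ _ ha', Real.exp_sub, Real.exp_log hy, Real.exp_log hx]
      field_simp
    · rintro ⟨u, rfl⟩
      positivity
  have hderiv : ∀ u ∈ (Set.univ : Set ℝ),
      HasDerivWithinAt (fun u : ℝ => x * Real.exp (a * u)) (x * (Real.exp (a * u) * a)) Set.univ u := by
    intro u _
    have h : HasDerivAt (fun u : ℝ => x * Real.exp (a * u)) (x * (Real.exp (a * u) * a)) u := by
      simpa using ((hasDerivAt_id u).const_mul a).exp.const_mul x
    exact h.hasDerivWithinAt
  have hinj : Set.InjOn (fun u : ℝ => x * Real.exp (a * u)) Set.univ := by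
    intro u _ v _ h
    simp only at h
    exact mul_left_cancel₀ ha' (Real.exp_injective (mul_left_cancel₀ hx' h))
  rw [himg, integral_image_eq_integral_abs_deriv_smul MeasurableSet.univ hderiv hinj]
  rw [setIntegral_univ]
  set b : ℝ := (σ + σ') / (2 * σ * σ') with hb
  have hbpos : 0 < b := by positivity
  have hs1 : (0:ℝ) < Real.sqrt (2 * Real.pi * σ) := Real.sqrt_pos.2 (by positivity)
  have hs2 : (0:ℝ) < Real.sqrt (2 * Real.pi * σ') := Real.sqrt_pos.2 (by positivity)
  have hK : ∀ u : ℝ,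
      |x * (Real.exp (a * u) * a)| • ((x * Real.exp (a * u)) ^ 2
          * qker a σ (x * Real.exp (a * u)) x * qker a σ' (x * Real.exp (a * u)) x)
      = (x * a⁻¹ * (Real.sqrt (2 * Real.pi * σ))⁻¹ * (Real.sqrt (2 * Real.pi * σ'))⁻¹
          * Real.exp (-a ^ 2 * (σ + σ') / 8)) * Real.exp (-b * u ^ 2) := by
    intro u
    have he : (0:ℝ) < Real.exp (a * u) := Real.exp_pos _
    have hlog : Real.log (x * Real.exp (a * u)) = Real.log x + a * u := by
      rw [Real.log_mul hx' he.ne', Real.log_exp]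
    rw [abs_of_pos (by positivity)]
    simp only [qker, heatK, hlog, smul_eq_mul]
    have harg : ∀ t : ℝ, (Real.log x + a * u) / a - Real.log x / a + a * t / 2
        = u + a * t / 2 := by
      intro t; field_simp; ring
    rw [harg σ, harg σ']
    have hexp : Real.exp (a * u) * (Real.exp (-((u + a * σ / 2) ^ 2) / (2 * σ))
        * Real.exp (-((u + a * σ' / 2) ^ 2) / (2 * σ')))
        = Real.exp (-a ^ 2 * (σ + σ') / 8) * Real.exp (-b * u ^ 2) := by
      rw [← Real.exp_add, ← Real.exp_add, ← Real.exp_add]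
      congr 1
      rw [hb]
      field_simp
      ring
    set E0 := Real.exp (a * u)
    set E1 := Real.exp (-((u + a * σ / 2) ^ 2) / (2 * σ))
    set E2 := Real.exp (-((u + a * σ' / 2) ^ 2) / (2 * σ'))
    set EB := Real.exp (-a ^ 2 * (σ + σ') / 8)
    set EG := Real.exp (-b * u ^ 2)
    set s1 := Real.sqrt (2 * Real.pi * σ)
    set s2 := Real.sqrt (2 * Real.pi * σ')
    have h0 : E0 ≠ 0 := he.ne'
    calc x * (E0 * a) * ((x * E0) ^ 2 * ((a * (x * E0))⁻¹ * (s1⁻¹ * E1))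
            * ((a * (x * E0))⁻¹ * (s2⁻¹ * E2)))
        = x * a⁻¹ * s1⁻¹ * s2⁻¹ * (E0 * (E1 * E2)) := by
          field_simp
      _ = x * a⁻¹ * s1⁻¹ * s2⁻¹ * EB * EG := by rw [hexp]; ring
  simp only [hK]
  rw [integral_const_mul, integral_gaussian]
  -- final algebra
  have hsum : (0:ℝ) < σ + σ' := by linarith
  have hpi : (0:ℝ) < Real.pi := Real.pi_pos
  have hrpow : (σ + σ') ^ (-(1:ℝ) / 2) = (Real.sqrt (σ + σ'))⁻¹ := by
    rw [neg_div, Real.rpow_neg hsum.le, Real.sqrt_eq_rpow]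
  rw [hrpow]
  have hsb : Real.sqrt (Real.pi / b) = Real.sqrt (2 * Real.pi) * Real.sqrt σ * Real.sqrt σ'
      / Real.sqrt (σ + σ') := by
    rw [show Real.pi / b = 2 * Real.pi * σ * σ' / (σ + σ') by rw [hb]; field_simp]
    rw [Real.sqrt_div (by positivity), Real.sqrt_mul (by positivity), Real.sqrt_mul (by positivity)]
  have hs1' : Real.sqrt (2 * Real.pi * σ) = Real.sqrt (2 * Real.pi) * Real.sqrt σ :=
    Real.sqrt_mul (by positivity) _
  have hs2' : Real.sqrt (2 * Real.pi * σ') = Real.sqrt (2 * Real.pi) * Real.sqrt σ' :=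
    Real.sqrt_mul (by positivity) _
  rw [hsb, hs1', hs2']
  have h2pi : (0:ℝ) < Real.sqrt (2 * Real.pi) := Real.sqrt_pos.2 (by positivity)
  have hsσ : (0:ℝ) < Real.sqrt σ := Real.sqrt_pos.2 hσ
  have hsσ' : (0:ℝ) < Real.sqrt σ' := Real.sqrt_pos.2 hσ'
  have hss : (0:ℝ) < Real.sqrt (σ + σ') := Real.sqrt_pos.2 hsum
  field_simp
end

section
/- For every x ∈ (0,∞) and all t, t' ∈ (0,∞): ( a x / √(2π) ) ∫_0^{min(t,t')} e^{-a²(t + t' - 2s)/8} (t + t' - 2s)^{-1/2} ds = 2x ( Φ( (a/2)(t + t')^{1/2} ) − Φ( (a/2) |t' − t|^{1/2} ) ). -/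
open MeasureTheory Real Set

lemma heatK_one_eq (z : ℝ) :
    heatK 1 z = (Real.sqrt (2 * Real.pi))⁻¹ * Real.exp (-(1/2 : ℝ) * z ^ 2) := by
  unfold heatK
  rw [mul_one]
  congr 1
  ring_nf

lemma measurable_rpow_const (c : ℝ) : Measurable fun x : ℝ => x ^ c := by
  have h : ∀ x : ℝ, x ^ c =
      if x = 0 then (0:ℝ) ^ c
      else if x < 0 then Real.exp (Real.log x * c) * Real.cos (c * Real.pi)
      else Real.exp (Real.log x * c) := by
    intro x
    rcases lt_trichotomy x 0 with hx | hx | hx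
    · rw [if_neg hx.ne, if_pos hx, Real.rpow_def_of_neg hx, mul_comm c Real.pi]
    · simp [hx]
    · rw [if_neg hx.ne', if_neg (not_lt.2 hx.le), Real.rpow_def_of_pos hx]
  rw [show (fun x : ℝ => x ^ c) = _ from funext h]
  apply Measurable.ite measurableSet_eq measurable_const
  apply Measurable.ite (measurableSet_lt measurable_id measurable_const)
  · exact (Real.measurable_log.mul measurable_const).exp.mul measurable_const
  · exact (Real.measurable_log.mul measurable_const).exp

theorem martingale_covariance_formula (a : ℝ) (ha : 0 < a) (x : ℝ) (hx : 0 < x)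
    (t t' : ℝ) (ht : 0 < t) (ht' : 0 < t') :
    (a * x / Real.sqrt (2 * Real.pi)) *
        (∫ s in (0:ℝ)..(min t t'),
          Real.exp (-a ^ 2 * (t + t' - 2 * s) / 8) * (t + t' - 2 * s) ^ (-(1:ℝ) / 2))
      = 2 * x * (Phi (a / 2 * Real.sqrt (t + t')) - Phi (a / 2 * Real.sqrt |t' - t|)) := by
  have hπ : (0:ℝ) < Real.sqrt (2 * Real.pi) := Real.sqrt_pos.2 (by positivity)
  set m := min t t' with hm
  have hm0 : 0 < m := lt_min ht ht'
  have hkey : t + t' - 2 * m = |t' - t| := by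
    rcases le_total t t' with h | h
    · rw [hm, min_eq_left h, abs_of_nonneg (by linarith)]; ring
    · rw [hm, min_eq_right h, abs_of_nonpos (by linarith)]; ring
  set b := a / 2 * Real.sqrt (t + t') with hb
  set c := a / 2 * Real.sqrt |t' - t| with hc
  set f : ℝ → ℝ := fun s =>
    Real.exp (-a ^ 2 * (t + t' - 2 * s) / 8) * (t + t' - 2 * s) ^ (-(1:ℝ) / 2) with hf
  set φ : ℝ → ℝ := fun s => a / 2 * Real.sqrt (t + t' - 2 * s) with hφ
  set H : ℝ → ℝ := fun y => ∫ u in (0:ℝ)..y, heatK 1 u with hH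
  set F : ℝ → ℝ := fun s => -(2 / a) * Real.sqrt (2 * Real.pi) * H (φ s) with hF
  have hIntAll : ∀ p q : ℝ, IntervalIntegrable (heatK 1) volume p q := fun p q =>
    heatK_one_integrable.intervalIntegrable
  have hHd : ∀ y : ℝ, HasDerivAt H (heatK 1 y) y := fun y =>
    (heatK_one_continuous.integral_hasStrictDerivAt 0 y).hasDerivAt
  -- derivative of F on the interior
  have hFd : ∀ s ∈ Set.Ioo (0:ℝ) m, HasDerivAt F (f s) s := by
    intro s hs
    have habs : (0:ℝ) ≤ |t' - t| := abs_nonneg _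
    have hv : 0 < t + t' - 2 * s := by
      have h2 : s < m := hs.2
      nlinarith
    have hsqpos : 0 < Real.sqrt (t + t' - 2 * s) := Real.sqrt_pos.2 hv
    have h1 : HasDerivAt (fun s : ℝ => t + t' - 2 * s) (-2) s := by
      simpa using ((hasDerivAt_id s).const_mul (2:ℝ)).const_sub (t + t')
    have h2 : HasDerivAt (fun s : ℝ => Real.sqrt (t + t' - 2 * s))
        (-2 / (2 * Real.sqrt (t + t' - 2 * s))) s := h1.sqrt hv.ne'
    have h3 : HasDerivAt φ (a / 2 * (-2 / (2 * Real.sqrt (t + t' - 2 * s)))) s :=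
      h2.const_mul (a / 2)
    have h4 : HasDerivAt (fun s : ℝ => H (φ s))
        (heatK 1 (φ s) * (a / 2 * (-2 / (2 * Real.sqrt (t + t' - 2 * s))))) s :=
      (hHd (φ s)).comp s h3
    have h5 := h4.const_mul (-(2 / a) * Real.sqrt (2 * Real.pi))
    have heq : f s = -(2 / a) * Real.sqrt (2 * Real.pi) *
        (heatK 1 (φ s) * (a / 2 * (-2 / (2 * Real.sqrt (t + t' - 2 * s))))) := by
      have hsq : Real.sqrt (t + t' - 2 * s) ^ 2 = t + t' - 2 * s := Real.sq_sqrt hv.le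
      have hrpow : (t + t' - 2 * s) ^ (-(1:ℝ) / 2) = (Real.sqrt (t + t' - 2 * s))⁻¹ := by
        rw [neg_div, Real.rpow_neg hv.le, ← Real.sqrt_eq_rpow]
      have hexp2 : heatK 1 (φ s) = (Real.sqrt (2 * Real.pi))⁻¹ *
          Real.exp (-a ^ 2 * (t + t' - 2 * s) / 8) := by
        rw [heatK_one_eq]
        congr 1
        simp only [hφ]
        rw [mul_pow, hsq]
        ring_nf
      simp only [hf, hrpow, hexp2]
      field_simp
    rw [heq]
    exact h5
  -- continuity of F on the closed interval
  have hFcont : ContinuousOn F (Set.Icc (0:ℝ) m) := by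
    have hHcont : Continuous H := intervalIntegral.continuous_primitive hIntAll 0
    have hφcont : Continuous φ := by
      apply Continuous.mul continuous_const
      exact Real.continuous_sqrt.comp (by fun_prop)
    have hcomp : Continuous fun s : ℝ => H (φ s) := hHcont.comp hφcont
    exact (continuous_const.mul hcomp).continuousOn
  -- integrability of f
  have hfint : IntervalIntegrable f volume 0 m := by
    have h0 : IntervalIntegrable (fun u : ℝ => u ^ (-(1:ℝ) / 2)) volume
        ((t + t') - 0 * 2) ((t + t') - m * 2) :=
      intervalIntegral.intervalIntegrable_rpow' (by norm_num)
    have h1 := h0.comp_sub_left (t + t')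
    have h2 := h1.comp_mul_right (c := 2)
    have hg : IntervalIntegrable (fun s : ℝ => (t + t' - 2 * s) ^ (-(1:ℝ) / 2))
        volume 0 m := by
      have : (fun s : ℝ => ((t + t') - s * 2) ^ (-(1:ℝ) / 2)) =
          fun s : ℝ => (t + t' - 2 * s) ^ (-(1:ℝ) / 2) := by
        funext s; ring_nf
      simpa [this, mul_div_assoc] using h2
    apply hg.mono_fun
    · apply Measurable.aestronglyMeasurable
      apply Measurable.mul
      · fun_prop
      · exact (measurable_rpow_const _).comp (by fun_prop)
    · filter_upwards [ae_restrict_mem measurableSet_uIoc] with s hs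
      rw [Set.uIoc_of_le hm0.le] at hs
      have hv : 0 ≤ t + t' - 2 * s := by
        have habs : (0:ℝ) ≤ |t' - t| := abs_nonneg _
        have := hs.2
        nlinarith
      have hr : 0 ≤ (t + t' - 2 * s) ^ (-(1:ℝ) / 2) := Real.rpow_nonneg hv _
      have hexp : Real.exp (-a ^ 2 * (t + t' - 2 * s) / 8) ≤ 1 := by
        rw [Real.exp_le_one_iff]
        nlinarith
      simp only [hf, Real.norm_eq_abs, abs_mul, Real.abs_exp, abs_of_nonneg hr]
      calc Real.exp (-a ^ 2 * (t + t' - 2 * s) / 8) * (t + t' - 2 * s) ^ (-(1:ℝ) / 2)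
          ≤ 1 * (t + t' - 2 * s) ^ (-(1:ℝ) / 2) := by
            exact mul_le_mul_of_nonneg_right hexp hr
        _ = (t + t' - 2 * s) ^ (-(1:ℝ) / 2) := one_mul _
  -- fundamental theorem of calculus
  have hFTC : ∫ s in (0:ℝ)..m, f s = F m - F 0 :=
    intervalIntegral.integral_eq_sub_of_hasDerivAt_of_le hm0.le hFcont hFd hfint
  have hφm : φ m = c := by rw [hφ]; simp only [hkey, hc]
  have hφ0 : φ 0 = b := by rw [hφ, hb]; norm_num
  have hHdiff : H b - H c = ∫ u in c..b, heatK 1 u :=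
    intervalIntegral.integral_interval_sub_left (hIntAll 0 b) (hIntAll 0 c)
  have hdiff : F m - F 0 = 2 / a * Real.sqrt (2 * Real.pi) * ∫ u in c..b, heatK 1 u := by
    simp only [hF, hφm, hφ0]
    rw [← hHdiff]
    ring
  have hPhi : Phi b - Phi c = ∫ u in c..b, heatK 1 u := by
    simp only [Phi]
    exact intervalIntegral.integral_Iic_sub_Iic heatK_one_integrable.integrableOn
      heatK_one_integrable.integrableOn
  rw [hFTC, hdiff, hPhi]
  field_simp
end
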